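/- arXiv:0809.2258 — 7 statements merged into one kernel-verified Lean document; each statement's English description precedes it below -/
import Mathlib

section
/- Let 0<p<1 and q=1−p. In a random graph order on the positive integers ℕ with parameter p, for every k≥1 the probability that the element k is a post (i.e., comparable under the order to every other element) equals λ_{k−1}(q)·κ(q). In particular this probability is strictly greater than κ(q)². -/
open MeasureTheory ProbabilityTheory Filter Topology

/-- The index set of potential edges of a random graph order on `ℕ = {1, 2, 3, …}`:
pairs `(i, j)` with `1 ≤ i < j`. -/
abbrev GraphOrderEdge : Type := {ij : ℕ × ℕ // 1 ≤ ij.1 ∧ ij.1 < ij.2}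

/-- The random graph order relation `≺_ω`: the transitive closure of the relation
`{(i, j) : 1 ≤ i < j and ω(i, j) = 1}`. -/
def GraphOrderRel (ω : GraphOrderEdge → Bool) (a b : ℕ) : Prop :=
  Relation.TransGen (fun x y => ∃ h : 1 ≤ x ∧ x < y, ω ⟨(x, y), h⟩ = true) a b

/-- `μ` is the law of a random graph order on `ℕ = {1, 2, 3, …}` with parameter `p`:
a probability measure on edge configurations whose coordinates are independent
Bernoulli(`p`) random variables. -/
structure IsRandomGraphOrderMeasure (μ : Measure (GraphOrderEdge → Bool)) (p : ℝ)
    (hp : 0 < p ∧ p < 1) : Prop where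
  isProb : IsProbabilityMeasure μ
  indep : iIndepFun (fun e ω => ω e) μ
  bernoulli : ∀ e : GraphOrderEdge, μ.map (fun ω => ω e) =
    (PMF.bernoulli (Real.toNNReal p) (Real.toNNReal_le_one.mpr hp.2.le)).toMeasure

/-- Partial product of the Euler function: `λ_k(q) = ∏_{i=1}^k (1 - q^i)`, `λ_0(q) = 1`. -/
noncomputable def eulerLam (q : ℝ) (k : ℕ) : ℝ := ∏ i ∈ Finset.range k, (1 - q ^ (i + 1))

/-- The Euler function `κ(q) = ∏_{i=1}^∞ (1 - q^i)`. -/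
noncomputable def eulerKappa (q : ℝ) : ℝ := ∏' i : ℕ, (1 - q ^ (i + 1))


namespace RGO

abbrev Cfg := GraphOrderEdge → Bool
def step (ω : Cfg) (x y : ℕ) : Prop := ∃ h : 1 ≤ x ∧ x < y, ω ⟨(x, y), h⟩ = true
lemma rel_def (ω : Cfg) (a b : ℕ) : GraphOrderRel ω a b ↔ Relation.TransGen (step ω) a b := Iff.rfl
lemma step_lt {ω : Cfg} {a b : ℕ} (h : step ω a b) : a < b := h.1.2
lemma rel_lt {ω : Cfg} {a b : ℕ} (h : GraphOrderRel ω a b) : a < b := by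
  rw [rel_def] at h
  induction h with
  | single h => exact step_lt h
  | tail _ h ih => exact ih.trans (step_lt h)

lemma rel_congr {ω ω' : Cfg} {al b : ℕ}
    (h : ∀ (e : GraphOrderEdge), al ≤ e.1.1 → e.1.2 ≤ b → ω e = ω' e)
    {a : ℕ} (ha : al ≤ a) (hr : GraphOrderRel ω a b) : GraphOrderRel ω' a b := by
  rw [rel_def] at hr ⊢
  refine Relation.TransGen.head_induction_on
    (motive := fun x (_ : Relation.TransGen (step ω) x b) =>
      al ≤ x → Relation.TransGen (step ω') x b) hr ?_ ?_ ha
  · intro x hs hx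
    exact Relation.TransGen.single ⟨hs.1, (h ⟨(x, b), hs.1⟩ hx le_rfl).symm.trans hs.2⟩
  · intro x c hs ht ih hx
    have hcb : c < b := rel_lt (ht : Relation.TransGen (step ω) c b)
    have hstep' : step ω' x c :=
      ⟨hs.1, (h ⟨(x, c), hs.1⟩ hx hcb.le).symm.trans hs.2⟩
    exact (ih (hx.trans hs.1.2.le)).head hstep'

lemma rel_head_iff {ω : Cfg} {a b : ℕ} :
    GraphOrderRel ω a b ↔ ∃ c, step ω a c ∧ (c = b ∨ GraphOrderRel ω c b) := by
  rw [rel_def, Relation.TransGen.head'_iff]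
  constructor
  · rintro ⟨c, hs, hr⟩
    rcases Relation.reflTransGen_iff_eq_or_transGen.mp hr with he | hr
    · exact ⟨c, hs, Or.inl he.symm⟩
    · exact ⟨c, hs, Or.inr hr⟩
  · rintro ⟨c, hs, rfl | hr⟩
    · exact ⟨c, hs, Relation.ReflTransGen.refl⟩
    · exact ⟨c, hs, hr.to_reflTransGen⟩

lemma rel_tail_iff {ω : Cfg} {a b : ℕ} :
    GraphOrderRel ω a b ↔ ∃ c, (c = a ∨ GraphOrderRel ω a c) ∧ step ω c b := by
  rw [rel_def, Relation.TransGen.tail'_iff]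
  constructor
  · rintro ⟨c, hr, hs⟩
    rcases Relation.reflTransGen_iff_eq_or_transGen.mp hr with he | hr
    · exact ⟨c, Or.inl he, hs⟩
    · exact ⟨c, Or.inr hr, hs⟩
  · rintro ⟨c, rfl | hr, hs⟩
    · exact ⟨c, Relation.ReflTransGen.refl, hs⟩
    · exact ⟨c, hr.to_reflTransGen, hs⟩


/-- edges with both endpoints in `[a, b]` -/
def box (a b : ℕ) : Finset GraphOrderEdge :=
  ((Finset.Icc a b) ×ˢ (Finset.Icc a b)).subtype _

lemma mem_box {a b : ℕ} {e : GraphOrderEdge} :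
    e ∈ box a b ↔ a ≤ e.1.1 ∧ e.1.2 ≤ b := by
  have h2 := e.2
  simp only [box, Finset.mem_subtype, Finset.mem_product, Finset.mem_Icc]
  omega

/-- edges from `t` to some `y ∈ (t, b]` -/
def row (t b : ℕ) : Finset GraphOrderEdge :=
  (({t} : Finset ℕ) ×ˢ Finset.Icc (t+1) b).subtype _

lemma mem_row {t b : ℕ} {e : GraphOrderEdge} :
    e ∈ row t b ↔ e.1.1 = t ∧ e.1.2 ≤ b := by
  have h2 := e.2
  simp only [row, Finset.mem_subtype, Finset.mem_product, Finset.mem_singleton, Finset.mem_Icc]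
  omega

lemma card_row {t b : ℕ} (ht : 1 ≤ t) (htb : t ≤ b) : (row t b).card = b - t := by
  rw [row, Finset.card_subtype, Finset.filter_true_of_mem, Finset.card_product]
  · simp [Nat.card_Icc]
  · rintro ⟨x, y⟩ hxy
    simp only [Finset.mem_product, Finset.mem_singleton, Finset.mem_Icc] at hxy
    exact ⟨hxy.1 ▸ ht, by omega⟩

/-- edges from some `x ∈ [a, n]` to `n+1` -/
def col (a n : ℕ) : Finset GraphOrderEdge :=
  ((Finset.Icc a n) ×ˢ ({n+1} : Finset ℕ)).subtype _

lemma mem_col {a n : ℕ} {e : GraphOrderEdge} :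
    e ∈ col a n ↔ a ≤ e.1.1 ∧ e.1.2 = n + 1 := by
  have h2 := e.2
  simp only [col, Finset.mem_subtype, Finset.mem_product, Finset.mem_singleton, Finset.mem_Icc]
  omega

lemma card_col {a n : ℕ} (ha : 1 ≤ a) (han : a ≤ n) : (col a n).card = n + 1 - a := by
  rw [col, Finset.card_subtype, Finset.filter_true_of_mem, Finset.card_product]
  · simp [Nat.card_Icc]
  · rintro ⟨x, y⟩ hxy
    simp only [Finset.mem_product, Finset.mem_singleton, Finset.mem_Icc] at hxy
    exact ⟨by omega, by omega⟩



def D (k t : ℕ) : Set Cfg := {ω | ∀ m, t ≤ m → m < k → GraphOrderRel ω m k}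
def U (k n : ℕ) : Set Cfg := {ω | ∀ m, k < m → m ≤ n → GraphOrderRel ω k m}
def E (k n : ℕ) : Set Cfg := D k 1 ∩ U k n

lemma D_top (k : ℕ) : D k k = Set.univ := by
  ext ω; simp only [D, Set.mem_setOf_eq, Set.mem_univ, iff_true]
  intro m hm hm'; omega

lemma U_base (k : ℕ) : U k k = Set.univ := by
  ext ω; simp only [U, Set.mem_setOf_eq, Set.mem_univ, iff_true]
  intro m hm hm'; omega

lemma D_succ {k t : ℕ} (ht : 1 ≤ t) (htk : t < k) :
    D k t = D k (t+1) ∩ {ω | ∃ e ∈ row t k, ω e = true} := by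
  ext ω
  simp only [D, Set.mem_inter_iff, Set.mem_setOf_eq]
  constructor
  · intro hD
    refine ⟨fun m hm hm' => hD m (by omega) hm', ?_⟩
    have hrel : GraphOrderRel ω t k := hD t le_rfl htk
    rcases rel_head_iff.mp hrel with ⟨c, hs, hc⟩
    have hck : c ≤ k := by
      rcases hc with rfl | hc
      · exact le_rfl
      · exact (rel_lt hc).le
    exact ⟨⟨(t, c), hs.1⟩, mem_row.mpr ⟨rfl, hck⟩, hs.2⟩
  · rintro ⟨hD, e, he, hetrue⟩
    intro m hm hmk
    rcases eq_or_lt_of_le hm with rfl | hm'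
    · -- m = t : use the edge e
      rcases mem_row.mp he with ⟨he1, he2⟩
      have hstep : step ω t e.1.2 := by
        refine ⟨he1 ▸ e.2, ?_⟩
        have : (⟨(t, e.1.2), he1 ▸ e.2⟩ : GraphOrderEdge) = e := by
          apply Subtype.ext
          show (t, e.1.2) = e.1
          rw [← he1]
        rw [this]; exact hetrue
      rcases eq_or_lt_of_le he2 with he3 | he3
      · exact Relation.TransGen.single (he3 ▸ hstep)
      · have : GraphOrderRel ω e.1.2 k := hD e.1.2 (by have := e.2; omega) he3
        exact Relation.TransGen.head hstep this
    · exact hD m hm' hmk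

lemma E_succ {k n : ℕ} (hk : 1 ≤ k) (hkn : k ≤ n) :
    E k (n+1) = E k n ∩ {ω | ∃ e ∈ col k n, ω e = true} := by
  ext ω
  simp only [E, U, D, Set.mem_inter_iff, Set.mem_setOf_eq]
  constructor
  · rintro ⟨hD, hU⟩
    refine ⟨⟨hD, fun m hm hm' => hU m hm (by omega)⟩, ?_⟩
    have hrel : GraphOrderRel ω k (n+1) := hU (n+1) (by omega) le_rfl
    rcases rel_tail_iff.mp hrel with ⟨c, hc, hs⟩
    have hck : k ≤ c := by
      rcases hc with rfl | hc
      · exact le_rfl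
      · exact (rel_lt hc).le
    exact ⟨⟨(c, n+1), hs.1⟩, mem_col.mpr ⟨hck, rfl⟩, hs.2⟩
  · rintro ⟨⟨hD, hU⟩, e, he, hetrue⟩
    refine ⟨hD, fun m hm hm' => ?_⟩
    rcases eq_or_lt_of_le hm' with rfl | hm''
    · -- m = n+1
      rcases mem_col.mp he with ⟨he1, he2⟩
      have hstep : step ω e.1.1 (n+1) := by
        refine ⟨he2 ▸ e.2, ?_⟩
        have : (⟨(e.1.1, n+1), he2 ▸ e.2⟩ : GraphOrderEdge) = e := by
          apply Subtype.ext
          show (e.1.1, n+1) = e.1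
          rw [← he2]
        rw [this]; exact hetrue
      rcases eq_or_lt_of_le he1 with he3 | he3
      · exact Relation.TransGen.single (he3 ▸ hstep)
      · have : GraphOrderRel ω k e.1.1 := hU e.1.1 he3 (by have := e.2; omega)
        exact Relation.TransGen.tail this hstep
    · exact hU m hm (by omega)

def detBy (s : Finset GraphOrderEdge) (A : Set Cfg) : Prop :=
  ∀ ω ω', (∀ e ∈ s, ω e = ω' e) → ω ∈ A → ω' ∈ A

lemma detBy_inter {s t : Finset GraphOrderEdge} {A B : Set Cfg}
    (hA : detBy s A) (hB : detBy t B) : detBy (s ∪ t) (A ∩ B) := by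
  rintro ω ω' hagree ⟨hA', hB'⟩
  exact ⟨hA ω ω' (fun e he => hagree e (Finset.mem_union_left _ he)) hA',
         hB ω ω' (fun e he => hagree e (Finset.mem_union_right _ he)) hB'⟩

lemma detBy_exists_true (s : Finset GraphOrderEdge) :
    detBy s {ω | ∃ e ∈ s, ω e = true} := by
  rintro ω ω' hagree ⟨e, he, h⟩
  exact ⟨e, he, (hagree e he).symm.trans h⟩

lemma detBy_allfalse (s : Finset GraphOrderEdge) :
    detBy s {ω | ∀ e ∈ s, ω e = false} := by
  rintro ω ω' hagree h e he
  exact (hagree e he).symm.trans (h e he)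

lemma detBy_D (k t : ℕ) : detBy (box t k) (D k t) := by
  intro ω ω' hagree hω m hm hmk
  refine rel_congr (al := t) ?_ hm (hω m hm hmk)
  intro e h1 h2
  exact hagree e (mem_box.mpr ⟨h1, h2⟩)

lemma detBy_U (k n : ℕ) : detBy (box k n) (U k n) := by
  intro ω ω' hagree hω m hm hmn
  refine rel_congr (al := k) ?_ le_rfl (hω m hm hmn)
  intro e h1 h2
  exact hagree e (mem_box.mpr ⟨h1, h2.trans hmn⟩)

lemma detBy_E (k n : ℕ) (hkn : k ≤ n) : detBy (box 1 n) (E k n) := by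
  intro ω ω' hagree hω
  refine detBy_inter (detBy_D k 1) (detBy_U k n) ω ω' ?_ hω
  intro e he
  refine hagree e (mem_box.mpr ?_)
  rcases Finset.mem_union.mp he with h | h
  · rcases mem_box.mp h with ⟨h1, h2⟩; exact ⟨h1, h2.trans hkn⟩
  · rcases mem_box.mp h with ⟨h1, h2⟩; exact ⟨e.2.1, h2⟩

lemma disj_box_row {k t : ℕ} : Disjoint (box (t+1) k) (row t k) := by
  rw [Finset.disjoint_left]
  intro e he he'
  have h1 := (mem_box.mp he).1
  have h2 := (mem_row.mp he').1
  omega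

lemma disj_box_col {k n : ℕ} : Disjoint (box 1 n) (col k n) := by
  rw [Finset.disjoint_left]
  intro e he he'
  have h1 := (mem_box.mp he).2
  have h2 := (mem_col.mp he').2
  omega


def restr (s : Finset GraphOrderEdge) (ω : Cfg) : {e // e ∈ s} → Bool := fun e => ω e.1

lemma measurable_restr (s : Finset GraphOrderEdge) : Measurable (restr s) :=
  measurable_pi_lambda _ (fun e => measurable_pi_apply e.1)

lemma detBy.eq_preimage {s : Finset GraphOrderEdge} {A : Set Cfg} (h : detBy s A) :
    A = restr s ⁻¹' (restr s '' A) := by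
  ext ω
  constructor
  · exact fun hω => Set.mem_image_of_mem _ hω
  · rintro ⟨ω₀, hω₀, heq⟩
    refine h ω₀ ω (fun e he => ?_) hω₀
    exact congrFun heq ⟨e, he⟩

lemma detBy.measurableSet {s : Finset GraphOrderEdge} {A : Set Cfg} (h : detBy s A) :
    MeasurableSet A := by
  rw [h.eq_preimage]
  exact (measurable_restr s) ((Set.to_countable _).measurableSet)

variable {μ : Measure Cfg} {p : ℝ} {hp : 0 < p ∧ p < 1}
  (hμ : IsRandomGraphOrderMeasure μ p hp)

lemma meas_inter (hμ : IsRandomGraphOrderMeasure μ p hp) {s t : Finset GraphOrderEdge}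
    {A B : Set Cfg} (hst : Disjoint s t) (hA : detBy s A) (hB : detBy t B) :
    μ (A ∩ B) = μ A * μ B := by
  have hind : IndepFun (fun ω (e : {e // e ∈ s}) => ω e.1)
      (fun ω (e : {e // e ∈ t}) => ω e.1) μ := by
    have := hμ.indep.indepFun_finset s t hst (fun e => measurable_pi_apply e)
    exact this
  have h1 := (indepFun_iff_measure_inter_preimage_eq_mul.mp hind)
    (restr s '' A) (restr t '' B)
    ((Set.to_countable _).measurableSet) ((Set.to_countable _).measurableSet)
  rw [hA.eq_preimage, hB.eq_preimage]
  exact h1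

lemma meas_coord_false (hμ : IsRandomGraphOrderMeasure μ p hp) (e : GraphOrderEdge) :
    μ {ω | ω e = false} = ENNReal.ofReal (1 - p) := by
  have hmeas : Measurable (fun ω : Cfg => ω e) := measurable_pi_apply e
  have : {ω : Cfg | ω e = false} = (fun ω : Cfg => ω e) ⁻¹' {false} := rfl
  rw [this, ← Measure.map_apply hmeas (measurableSet_singleton _), hμ.bernoulli e,
    PMF.toMeasure_apply_singleton _ _ (measurableSet_singleton _)]
  show (1 : ENNReal) - ENNReal.ofReal p = _
  rw [ENNReal.ofReal_sub 1 hp.1.le, ENNReal.ofReal_one]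

lemma meas_allfalse (hμ : IsRandomGraphOrderMeasure μ p hp) (s : Finset GraphOrderEdge) :
    μ {ω | ∀ e ∈ s, ω e = false} = ENNReal.ofReal (1 - p) ^ s.card := by
  classical
  induction s using Finset.induction with
  | empty =>
      simp only [Finset.notMem_empty, false_implies, implies_true, Set.setOf_true,
        Finset.card_empty, pow_zero]
      exact hμ.isProb.measure_univ
  | @insert a s' ha ih =>
      have hsplit : {ω : Cfg | ∀ e ∈ insert a s', ω e = false}
          = {ω : Cfg | ω a = false} ∩ {ω | ∀ e ∈ s', ω e = false} := by
        ext ω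
        simp only [Set.mem_inter_iff, Set.mem_setOf_eq, Finset.mem_insert]
        constructor
        · intro h; exact ⟨h a (Or.inl rfl), fun e he => h e (Or.inr he)⟩
        · rintro ⟨h1, h2⟩ e (rfl | he)
          · exact h1
          · exact h2 e he
      have hdet1 : detBy {a} {ω : Cfg | ω a = false} := by
        rintro ω ω' hagree h
        exact (hagree a (Finset.mem_singleton_self a)).symm.trans h
      have hdet2 : detBy s' {ω : Cfg | ∀ e ∈ s', ω e = false} := by
        rintro ω ω' hagree h e he
        exact (hagree e he).symm.trans (h e he)
      rw [hsplit, meas_inter hμ (Finset.disjoint_singleton_left.mpr ha) hdet1 hdet2,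
        meas_coord_false hμ, ih, Finset.card_insert_of_notMem ha, pow_succ]
      ring

lemma meas_exists_true (hμ : IsRandomGraphOrderMeasure μ p hp) (s : Finset GraphOrderEdge) :
    μ {ω | ∃ e ∈ s, ω e = true} = ENNReal.ofReal (1 - (1 - p) ^ s.card) := by
  have hdet : detBy s {ω : Cfg | ∀ e ∈ s, ω e = false} := by
    rintro ω ω' hagree h e he
    exact (hagree e he).symm.trans (h e he)
  have hcompl : {ω : Cfg | ∃ e ∈ s, ω e = true} = {ω : Cfg | ∀ e ∈ s, ω e = false}ᶜ := by
    ext ω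
    simp only [Set.mem_compl_iff, Set.mem_setOf_eq, not_forall, Bool.not_eq_false]
    constructor
    · rintro ⟨e, he, h⟩; exact ⟨e, he, h⟩
    · rintro ⟨e, he, h⟩; exact ⟨e, he, h⟩
  have : IsProbabilityMeasure μ := hμ.isProb
  rw [hcompl, measure_compl hdet.measurableSet (measure_ne_top μ _), meas_allfalse hμ,
    measure_univ]
  have hq0 : (0:ℝ) ≤ 1 - p := by linarith [hp.2]
  have hq1 : (1 - p) ^ s.card ≤ 1 := pow_le_one₀ hq0 (by linarith [hp.1])
  rw [← ENNReal.ofReal_pow hq0, ← ENNReal.ofReal_one, ← ENNReal.ofReal_sub _ (by positivity)]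


variable {q : ℝ}

lemma f_pos (hq0 : 0 < q) (hq1 : q < 1) (i : ℕ) : 0 < 1 - q ^ (i + 1) := by
  have := pow_lt_one₀ hq0.le hq1 (n := i + 1) (by omega)
  linarith

lemma f_le_one (hq0 : 0 < q) (i : ℕ) : 1 - q ^ (i + 1) ≤ 1 := by
  have : 0 < q ^ (i + 1) := pow_pos hq0 _
  linarith

lemma lam_pos (hq0 : 0 < q) (hq1 : q < 1) (k : ℕ) : 0 < eulerLam q k :=
  Finset.prod_pos fun i _ => f_pos hq0 hq1 i

/-- finite products over larger finsets are smaller -/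
lemma prod_anti (hq0 : 0 < q) (hq1 : q < 1) {s t : Finset ℕ} (hst : s ⊆ t) :
    ∏ i ∈ t, (1 - q ^ (i + 1)) ≤ ∏ i ∈ s, (1 - q ^ (i + 1)) := by
  rw [← Finset.prod_sdiff hst]
  have h1 : ∏ i ∈ t \ s, (1 - q ^ (i + 1)) ≤ 1 :=
    Finset.prod_le_one (fun i _ => (f_pos hq0 hq1 i).le) (fun i _ => f_le_one hq0 i)
  have h2 : 0 < ∏ i ∈ s, (1 - q ^ (i + 1)) :=
    Finset.prod_pos fun i _ => f_pos hq0 hq1 i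
  nlinarith

/-- Weierstrass-type bound -/
lemma prod_ge_one_sub_sum (u : Finset ℕ) (a : ℕ → ℝ) (h0 : ∀ i ∈ u, 0 ≤ a i)
    (h1 : ∀ i ∈ u, a i ≤ 1) : 1 - ∑ i ∈ u, a i ≤ ∏ i ∈ u, (1 - a i) := by
  classical
  induction u using Finset.induction with
  | empty => simp
  | @insert j u' hj ih =>
      have h0' : ∀ i ∈ u', 0 ≤ a i := fun i hi => h0 i (Finset.mem_insert_of_mem hi)
      have h1' : ∀ i ∈ u', a i ≤ 1 := fun i hi => h1 i (Finset.mem_insert_of_mem hi)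
      have ihu := ih h0' h1'
      rw [Finset.prod_insert hj, Finset.sum_insert hj]
      have haj0 : 0 ≤ a j := h0 j (Finset.mem_insert_self j u')
      have haj1 : a j ≤ 1 := h1 j (Finset.mem_insert_self j u')
      have hsum0 : 0 ≤ ∑ i ∈ u', a i := Finset.sum_nonneg h0'
      nlinarith

lemma exists_unif_lb (hq0 : 0 < q) (hq1 : q < 1) : ∃ c : ℝ, 0 < c ∧ ∀ n : ℕ, c ≤ eulerLam q n := by
  -- choose N with q^(N+1) * (1-q)⁻¹ ≤ 1/2
  obtain ⟨N, hN⟩ : ∃ N : ℕ, q ^ (N + 1) ≤ (1 - q) / 2 := by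
    have h := tendsto_pow_atTop_nhds_zero_of_lt_one hq0.le hq1
    have h2 : (0:ℝ) < (1 - q) / 2 := by linarith
    obtain ⟨N, hN⟩ := (h.eventually (eventually_le_nhds h2)).exists_forall_of_atTop
    exact ⟨N, hN (N + 1) (by omega)⟩
  refine ⟨eulerLam q N * (1 / 2), mul_pos (lam_pos hq0 hq1 N) one_half_pos, fun n => ?_⟩
  rcases le_total n N with hn | hn
  · have h1 : eulerLam q N ≤ eulerLam q n := by
      apply prod_anti hq0 hq1
      exact Finset.range_subset_range.mpr hn
    nlinarith [lam_pos hq0 hq1 N]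
  · -- n ≥ N
    have hsplit : eulerLam q n = eulerLam q N * ∏ i ∈ Finset.Ico N n, (1 - q ^ (i + 1)) := by
      rw [eulerLam, eulerLam, ← Finset.prod_range_mul_prod_Ico _ hn]
    have htail : ∑ i ∈ Finset.Ico N n, q ^ (i + 1) ≤ 1 / 2 := by
      have : ∑ i ∈ Finset.Ico N n, q ^ (i + 1)
          = ∑ j ∈ Finset.range (n - N), q ^ (N + j + 1) := by
        rw [Finset.sum_Ico_eq_sum_range]
      rw [this]
      have hgs : ∑ j ∈ Finset.range (n - N), q ^ (N + j + 1)
          = q ^ (N + 1) * ∑ j ∈ Finset.range (n - N), q ^ j := by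
        rw [Finset.mul_sum]
        congr 1; ext j; ring
      rw [hgs]
      have hsum_le : ∑ j ∈ Finset.range (n - N), q ^ j ≤ (1 - q)⁻¹ :=
        Summable.sum_le_tsum _ (fun i _ => (pow_pos hq0 i).le)
          (summable_geometric_of_lt_one hq0.le hq1) |>.trans_eq
          (tsum_geometric_of_lt_one hq0.le hq1)
      calc q ^ (N + 1) * ∑ j ∈ Finset.range (n - N), q ^ j
          ≤ ((1 - q) / 2) * (1 - q)⁻¹ := by
            apply mul_le_mul hN hsum_le (Finset.sum_nonneg fun i _ => (pow_pos hq0 i).le)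
              (by linarith)
        _ = 1 / 2 := by
            have hne : (1:ℝ) - q ≠ 0 := by linarith
            field_simp
    have hbound : (1:ℝ) - 1/2 ≤ ∏ i ∈ Finset.Ico N n, (1 - q ^ (i + 1)) := by
      calc (1:ℝ) - 1/2 ≤ 1 - ∑ i ∈ Finset.Ico N n, q ^ (i + 1) := by linarith
        _ ≤ _ := prod_ge_one_sub_sum _ _ (fun i _ => (pow_pos hq0 _).le)
            (fun i _ => (pow_lt_one₀ hq0.le hq1 (by omega)).le)
    rw [hsplit]
    have := lam_pos hq0 hq1 N
    nlinarith

lemma hasProd_f (hq0 : 0 < q) (hq1 : q < 1) : HasProd (fun i : ℕ => 1 - q ^ (i + 1))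
    (⨅ s : Finset ℕ, ∏ i ∈ s, (1 - q ^ (i + 1))) := by
  apply tendsto_atTop_ciInf
  · intro s t hst
    exact prod_anti hq0 hq1 hst
  · refine ⟨0, fun x hx => ?_⟩
    obtain ⟨s, rfl⟩ := hx
    exact Finset.prod_nonneg fun i _ => (f_pos hq0 hq1 i).le

lemma tendsto_lam (hq0 : 0 < q) (hq1 : q < 1) : Tendsto (fun n => eulerLam q n) atTop (𝓝 (eulerKappa q)) := by
  have h := (hasProd_f hq0 hq1).multipliable.hasProd
  have h2 : Tendsto (fun n => ∏ i ∈ Finset.range n, (1 - q ^ (i + 1))) atTop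
      (𝓝 (∏' i : ℕ, (1 - q ^ (i + 1)))) := h.tendsto_prod_nat
  exact h2

lemma kappa_pos (hq0 : 0 < q) (hq1 : q < 1) : 0 < eulerKappa q := by
  obtain ⟨c, hc, hcb⟩ := exists_unif_lb hq0 hq1
  have h2 : c ≤ eulerKappa q := ge_of_tendsto' (tendsto_lam hq0 hq1) hcb
  linarith

lemma kappa_le_lam (hq0 : 0 < q) (hq1 : q < 1) (n : ℕ) : eulerKappa q ≤ eulerLam q n := by
  refine le_of_tendsto (tendsto_lam hq0 hq1) ?_
  filter_upwards [eventually_ge_atTop n] with m hm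
  exact prod_anti hq0 hq1 (Finset.range_subset_range.mpr hm)

lemma kappa_lt_lam (hq0 : 0 < q) (hq1 : q < 1) (k : ℕ) (hk : 1 ≤ k) : eulerKappa q < eulerLam q (k - 1) := by
  obtain ⟨j, rfl⟩ : ∃ j, k = j + 1 := ⟨k - 1, by omega⟩
  simp only [Nat.add_sub_cancel]
  have h1 : eulerKappa q ≤ eulerLam q (j + 1) := kappa_le_lam hq0 hq1 (j + 1)
  have h2 : eulerLam q (j + 1) = eulerLam q j * (1 - q ^ (j + 1)) :=
    Finset.prod_range_succ _ _
  have hl := lam_pos (q := q) hq0 hq1 j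
  have hqp : 0 < q ^ (j + 1) := pow_pos hq0 _
  nlinarith


end RGO

namespace RGO

variable {μ : Measure Cfg} {p : ℝ} {hp : 0 < p ∧ p < 1}

lemma meas_D (hμ : IsRandomGraphOrderMeasure μ p hp) (k : ℕ) (hk : 1 ≤ k) :
    ∀ d, d ≤ k - 1 → μ (D k (k - d)) = ENNReal.ofReal (eulerLam (1 - p) d) := by
  intro d
  induction d with
  | zero =>
      intro _
      have : IsProbabilityMeasure μ := hμ.isProb
      simp only [Nat.sub_zero, D_top, eulerLam, Finset.range_zero, Finset.prod_empty,
        ENNReal.ofReal_one, measure_univ]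
  | succ d ih =>
      intro hd
      obtain ⟨t, ht, ht1, htk, htd⟩ :
          ∃ t, k - (d + 1) = t ∧ 1 ≤ t ∧ t < k ∧ k - d = t + 1 :=
        ⟨k - (d + 1), rfl, by omega, by omega, by omega⟩
      rw [htd] at ih
      rw [ht, D_succ ht1 htk,
        meas_inter hμ disj_box_row (detBy_D k (t + 1)) (detBy_exists_true _),
        ih (by omega), meas_exists_true hμ, card_row ht1 htk.le]
      have hcard : k - t = d + 1 := by omega
      rw [hcard]
      have hq0 : (0:ℝ) < 1 - p := by linarith [hp.2]
      have hq1 : (1:ℝ) - p < 1 := by linarith [hp.1]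
      rw [← ENNReal.ofReal_mul (lam_pos hq0 hq1 d).le]
      congr 1
      rw [eulerLam, eulerLam, Finset.prod_range_succ]

lemma meas_E (hμ : IsRandomGraphOrderMeasure μ p hp) (k : ℕ) (hk : 1 ≤ k) :
    ∀ n, μ (E k (k + n)) =
      ENNReal.ofReal (eulerLam (1 - p) (k - 1) * eulerLam (1 - p) n) := by
  have hq0 : (0:ℝ) < 1 - p := by linarith [hp.2]
  have hq1 : (1:ℝ) - p < 1 := by linarith [hp.1]
  intro n
  induction n with
  | zero =>
      have hE : E k (k + 0) = D k 1 := by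
        rw [Nat.add_zero, E, U_base, Set.inter_univ]
      rw [hE]
      have h1 : k - (k - 1) = 1 := by omega
      have := meas_D hμ k hk (k - 1) le_rfl
      rw [h1] at this
      rw [this]
      simp [eulerLam]
  | succ n ih =>
      have hkn : k ≤ k + n := by omega
      have hsucc : k + (n + 1) = (k + n) + 1 := by omega
      rw [hsucc, E_succ hk hkn,
        meas_inter hμ disj_box_col (detBy_E k (k + n) hkn) (detBy_exists_true _),
        ih, meas_exists_true hμ, card_col hk hkn]
      have hcard : k + n + 1 - k = n + 1 := by omega
      rw [hcard]
      rw [← ENNReal.ofReal_mul (mul_nonneg (lam_pos hq0 hq1 _).le (lam_pos hq0 hq1 _).le)]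
      congr 1
      rw [eulerLam, eulerLam, eulerLam, Finset.prod_range_succ]
      ring

lemma target_eq (k : ℕ) (hk : 1 ≤ k) :
    {ω : Cfg | ∀ m : ℕ, 1 ≤ m → m ≠ k → (GraphOrderRel ω m k ∨ GraphOrderRel ω k m)}
      = ⋂ n : ℕ, E k (k + n) := by
  ext ω
  simp only [Set.mem_setOf_eq, Set.mem_iInter, E, D, U, Set.mem_inter_iff]
  constructor
  · intro hT n
    constructor
    · intro m hm hmk
      rcases hT m hm (by omega) with h | h
      · exact h
      · exact absurd (rel_lt h) (by omega)
    · intro m hm hmn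
      rcases hT m (by omega) (by omega) with h | h
      · exact absurd (rel_lt h) (by omega)
      · exact h
  · intro hE m hm hmk
    rcases lt_or_gt_of_ne hmk with hlt | hgt
    · exact Or.inl ((hE 0).1 m hm hlt)
    · exact Or.inr ((hE m).2 m hgt (by omega))

end RGO

/-- In a random graph order on `ℕ = {1, 2, …}` with parameter `0 < p < 1` and `q = 1 - p`,
for every `k ≥ 1` the probability that `k` is a post (related to every other element)
equals `λ_{k-1}(q) · κ(q)`; in particular it is strictly greater than `κ(q)²`. -/
theorem prob_isPost_eq (p q : ℝ) (hp : 0 < p ∧ p < 1) (hq : q = 1 - p)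
    (μ : Measure (GraphOrderEdge → Bool)) (hμ : IsRandomGraphOrderMeasure μ p hp)
    (k : ℕ) (hk : 1 ≤ k) :
    μ {ω | ∀ m : ℕ, 1 ≤ m → m ≠ k → (GraphOrderRel ω m k ∨ GraphOrderRel ω k m)} =
        ENNReal.ofReal (eulerLam q (k - 1) * eulerKappa q) ∧
    ENNReal.ofReal (eulerKappa q ^ 2) <
      μ {ω | ∀ m : ℕ, 1 ≤ m → m ≠ k → (GraphOrderRel ω m k ∨ GraphOrderRel ω k m)} := by
  subst hq
  have hq0 : (0:ℝ) < 1 - p := by linarith [hp.2]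
  have hq1 : (1:ℝ) - p < 1 := by linarith [hp.1]
  have : IsProbabilityMeasure μ := hμ.isProb
  have hmain : μ {ω | ∀ m : ℕ, 1 ≤ m → m ≠ k →
      (GraphOrderRel ω m k ∨ GraphOrderRel ω k m)} =
      ENNReal.ofReal (eulerLam (1 - p) (k - 1) * eulerKappa (1 - p)) := by
    rw [RGO.target_eq k hk]
    have htd : Filter.Tendsto (fun n => μ (RGO.E k (k + n))) Filter.atTop
        (𝓝 (μ (⋂ n : ℕ, RGO.E k (k + n)))) := by
      have := MeasureTheory.tendsto_measure_iInter_atTop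
        (μ := μ) (s := fun n => RGO.E k (k + n))
        (fun n => (RGO.detBy_E k (k + n) (by omega)).measurableSet.nullMeasurableSet)
        (fun a b hab => by
          intro ω hω
          rcases hω with ⟨hD, hU⟩
          exact ⟨hD, fun m hm hmn => hU m hm (by omega)⟩)
        ⟨0, measure_ne_top μ _⟩
      exact this
    have htd2 : Filter.Tendsto (fun n => μ (RGO.E k (k + n))) Filter.atTop
        (𝓝 (ENNReal.ofReal (eulerLam (1 - p) (k - 1) * eulerKappa (1 - p)))) := by
      have heq : (fun n => μ (RGO.E k (k + n)))
          = fun n => ENNReal.ofReal (eulerLam (1 - p) (k - 1) * eulerLam (1 - p) n) := by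
        funext n; exact RGO.meas_E hμ k hk n
      rw [heq]
      apply ENNReal.tendsto_ofReal
      exact (RGO.tendsto_lam hq0 hq1).const_mul _
    exact tendsto_nhds_unique htd htd2
  refine ⟨hmain, ?_⟩
  rw [hmain]
  have hκ := RGO.kappa_pos hq0 hq1
  have hlt := RGO.kappa_lt_lam hq0 hq1 k hk
  have hlam := RGO.lam_pos hq0 hq1 (k - 1)
  exact (ENNReal.ofReal_lt_ofReal_iff (mul_pos hlam hκ)).mpr (by nlinarith)
end

section
/- Let 0<p<1 and q=1−p. In a random graph order on the positive integers ℕ with parameter p, for every n≥1 the probability that n is related to every later element (i.e., n ≺_ω m for all m>n) equals κ(q)=∏_{j=1}^∞(1−q^j). -/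
open MeasureTheory ProbabilityTheory

/-! ### Auxiliary definitions -/

/-- A total version of the edge constructor: `edg a b` is the edge `(a, b)` when
`1 ≤ a < b`, and a junk value otherwise. -/
def edg (a b : ℕ) : GraphOrderEdge :=
  if h : 1 ≤ a ∧ a < b then ⟨(a, b), h⟩ else ⟨(1, 2), by omega⟩

lemma edg_eq {a b : ℕ} (h : 1 ≤ a ∧ a < b) : edg a b = ⟨(a, b), h⟩ := dif_pos h

/-- The event that some edge goes from `[n, n+k+1)` into `n+k+1`. -/
def Fev (n k : ℕ) : Set (GraphOrderEdge → Bool) :=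
  ⋃ j ∈ Finset.Ico n (n + k + 1), (fun ω => ω (edg j (n + k + 1))) ⁻¹' {true}

lemma mem_Fev {n k : ℕ} {ω : GraphOrderEdge → Bool} :
    ω ∈ Fev n k ↔ ∃ j, n ≤ j ∧ j < n + k + 1 ∧ ω (edg j (n + k + 1)) = true := by
  simp [Fev, Finset.mem_Ico, and_assoc]

lemma graphOrderRel_lt {ω : GraphOrderEdge → Bool} {a b : ℕ} (h : GraphOrderRel ω a b) :
    a < b := by
  induction h with
  | single h => exact h.choose.2
  | tail _ h ih => exact ih.trans h.choose.2

/-- The event `{∀ m > n, n ≺ m}` is exactly the intersection of the events `Fev n k`. -/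
lemma event_eq (n : ℕ) (hn : 1 ≤ n) :
    {ω : GraphOrderEdge → Bool | ∀ m : ℕ, n < m → GraphOrderRel ω n m} = ⋂ k, Fev n k := by
  ext ω
  simp only [Set.mem_setOf_eq, Set.mem_iInter]
  constructor
  · intro h k
    have hk := h (n + k + 1) (by omega)
    rw [GraphOrderRel] at hk
    cases hk with
    | single h' =>
      obtain ⟨hc, hω⟩ := h'
      refine mem_Fev.2 ⟨n, le_refl n, by omega, ?_⟩
      rw [edg_eq hc]; exact hω
    | tail h1 h2 =>
      obtain ⟨hc, hω⟩ := h2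
      refine mem_Fev.2 ⟨_, (graphOrderRel_lt h1).le, hc.2, ?_⟩
      rw [edg_eq hc]; exact hω
  · intro h m hm
    obtain ⟨k, rfl⟩ : ∃ k, m = n + k + 1 := ⟨m - n - 1, by omega⟩
    clear hm
    induction k using Nat.strong_induction_on with
    | _ k IH =>
      obtain ⟨j, hj1, hj2, hω⟩ := mem_Fev.1 (h k)
      have hc : 1 ≤ j ∧ j < n + k + 1 := ⟨hn.trans hj1, hj2⟩
      rw [edg_eq hc] at hω
      rcases eq_or_lt_of_le hj1 with rfl | hlt
      · exact Relation.TransGen.single ⟨hc, hω⟩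
      · have hj3 : j = n + (j - n - 1) + 1 := by omega
        have hrel : GraphOrderRel ω n j := by
          have := IH (j - n - 1) (by omega)
          rwa [← hj3] at this
        exact hrel.tail ⟨hc, hω⟩

/-- Cylinder set describing `Fev n K` through the coordinates in `S`. -/
def cylA (n K : ℕ) (S : Finset GraphOrderEdge) : Set (S → Bool) :=
  {g | ∃ j ∈ Finset.Ico n (n + K + 1),
    ∀ hm : edg j (n + K + 1) ∈ S, g ⟨edg j (n + K + 1), hm⟩ = true}

/-- Cylinder set describing `⋂_{k<K} Fev n k` through the coordinates in `T`. -/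
def cylB (n K : ℕ) (T : Finset GraphOrderEdge) : Set (T → Bool) :=
  {g | ∀ k ∈ Finset.range K, ∃ j ∈ Finset.Ico n (n + k + 1),
    ∀ hm : edg j (n + k + 1) ∈ T, g ⟨edg j (n + k + 1), hm⟩ = true}

/-- In a random graph order on `ℕ = {1, 2, …}` with parameter `0 < p < 1` and `q = 1 - p`,
for every `n ≥ 1` the probability that `n` is related to every later element
(i.e. `n ≺_ω m` for all `m > n`) equals `κ(q) = ∏_{j=1}^∞ (1 - q^j)`. -/
theorem prob_rel_all_above_eq (p q : ℝ) (hp : 0 < p ∧ p < 1) (hq : q = 1 - p)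
    (μ : Measure (GraphOrderEdge → Bool)) (hμ : IsRandomGraphOrderMeasure μ p hp)
    (n : ℕ) (hn : 1 ≤ n) :
    μ {ω | ∀ m : ℕ, n < m → GraphOrderRel ω n m} = ENNReal.ofReal (eulerKappa q) := by
  classical
  haveI : IsProbabilityMeasure μ := hμ.isProb
  have hq0 : 0 < q := by rw [hq]; linarith [hp.2]
  have hq1 : q < 1 := by rw [hq]; linarith [hp.1]
  -- probability that a given coordinate is `false`
  have hcoord : ∀ e : GraphOrderEdge,
      μ ((fun ω : GraphOrderEdge → Bool => ω e) ⁻¹' {false}) = ENNReal.ofReal q := by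
    intro e
    have h1 : μ ((fun ω : GraphOrderEdge → Bool => ω e) ⁻¹' {false})
        = (μ.map (fun ω => ω e)) {false} := by
      rw [Measure.map_apply (measurable_pi_apply e) (measurableSet_singleton _)]
    rw [h1, hμ.bernoulli e,
      PMF.toMeasure_apply_singleton _ _ (measurableSet_singleton _),
      PMF.bernoulli_apply]
    simp only [Bool.cond_false]
    rw [hq, ENNReal.coe_sub, ENNReal.coe_one, ENNReal.ofReal_sub _ hp.1.le, ENNReal.ofReal_one]
    rfl
  -- measurability of Fev
  have hmeasF : ∀ k, MeasurableSet (Fev n k) := by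
    intro k
    exact (Finset.Ico n (n + k + 1)).measurableSet_biUnion
      (fun j _ => (measurable_pi_apply _) (measurableSet_singleton _))
  -- probability of the complement of Fev n k
  have hcompl : ∀ k, μ ((Fev n k)ᶜ) = ENNReal.ofReal q ^ (k + 1) := by
    intro k
    have h1 : (Fev n k)ᶜ = ⋂ j ∈ Finset.Ico n (n + k + 1),
        (fun ω : GraphOrderEdge → Bool => ω (edg j (n + k + 1))) ⁻¹' {false} := by
      ext ω
      simp [Fev, Bool.not_eq_true]
    have hinj : Set.InjOn (fun j => edg j (n + k + 1)) ↑(Finset.Ico n (n + k + 1)) := by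
      intro a ha b hb hab
      rw [Finset.coe_Ico, Set.mem_Ico] at ha hb
      have h1 : 1 ≤ a ∧ a < n + k + 1 := ⟨hn.trans ha.1, ha.2⟩
      have h2 : 1 ≤ b ∧ b < n + k + 1 := ⟨hn.trans hb.1, hb.2⟩
      simpa [edg_eq h1, edg_eq h2, Subtype.ext_iff, Prod.ext_iff] using hab
    have h2 : (⋂ j ∈ Finset.Ico n (n + k + 1),
        (fun ω : GraphOrderEdge → Bool => ω (edg j (n + k + 1))) ⁻¹' {false})
        = ⋂ e ∈ (Finset.Ico n (n + k + 1)).image (fun j => edg j (n + k + 1)),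
          (fun ω : GraphOrderEdge → Bool => ω e) ⁻¹' {false} := by
      ext ω
      simp only [Set.mem_iInter, Finset.mem_image]
      constructor
      · rintro h e ⟨j, hj, rfl⟩
        exact h j hj
      · intro h j hj
        exact h _ ⟨j, hj, rfl⟩
    rw [h1, h2]
    rw [hμ.indep.meas_biInter
      (fun e _ => ⟨{false}, measurableSet_singleton _, rfl⟩)]
    rw [Finset.prod_congr rfl (fun e _ => hcoord e), Finset.prod_const,
      Finset.card_image_of_injOn hinj, Nat.card_Ico]
    congr 1
    omega
  -- probability of Fev n k
  have hF : ∀ k, μ (Fev n k) = ENNReal.ofReal (1 - q ^ (k + 1)) := by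
    intro k
    have h2 : μ (Fev n k) = 1 - μ ((Fev n k)ᶜ) := by
      conv_lhs => rw [← compl_compl (Fev n k)]
      exact prob_compl_eq_one_sub (hmeasF k).compl
    rw [h2, hcompl k, ENNReal.ofReal_sub _ (pow_nonneg hq0.le _), ENNReal.ofReal_one,
      ENNReal.ofReal_pow hq0.le]
  -- product formula for finite intersections
  have key : ∀ K, μ (⋂ k ∈ Finset.range K, Fev n k)
      = ∏ k ∈ Finset.range K, ENNReal.ofReal (1 - q ^ (k + 1)) := by
    intro K
    induction K with
    | zero => simp
    | succ K IH =>
      rw [Finset.range_add_one, Finset.prod_insert Finset.notMem_range_self]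
      have hins : (⋂ k ∈ insert K (Finset.range K), Fev n k)
          = Fev n K ∩ ⋂ k ∈ Finset.range K, Fev n k := by
        simp [Set.biInter_insert]
      rw [hins, ← IH, ← hF K]
      -- independence of the two groups of coordinates
      set S : Finset GraphOrderEdge :=
        (Finset.Ico n (n + K + 1)).image (fun j => edg j (n + K + 1)) with hSdef
      set T : Finset GraphOrderEdge :=
        (Finset.range K).biUnion
          (fun k => (Finset.Ico n (n + k + 1)).image (fun j => edg j (n + k + 1))) with hTdef
      have hedg2 : ∀ {a b : ℕ}, n ≤ a → a < b → (edg a b).1.2 = b := by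
        intro a b h1 h2
        rw [edg_eq ⟨hn.trans h1, h2⟩]
      have hST : Disjoint S T := by
        rw [Finset.disjoint_left]
        rintro e he heT
        rw [hSdef, Finset.mem_image] at he
        obtain ⟨j, hj, rfl⟩ := he
        rw [Finset.mem_Ico] at hj
        rw [hTdef, Finset.mem_biUnion] at heT
        obtain ⟨k, hk, he'⟩ := heT
        rw [Finset.mem_image] at he'
        obtain ⟨j', hj', he''⟩ := he'
        rw [Finset.mem_Ico] at hj'
        rw [Finset.mem_range] at hk
        have e1 := hedg2 hj.1 hj.2
        have e2 : (edg j (n + K + 1)).1.2 = n + k + 1 := by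
          rw [← he'']; exact hedg2 hj'.1 hj'.2
        omega
      have hXY := hμ.indep.indepFun_finset S T hST (fun e => measurable_pi_apply e)
      have hFA : Fev n K = (fun (ω : GraphOrderEdge → Bool) (i : S) => ω ↑i) ⁻¹' cylA n K S := by
        ext ω
        rw [Set.mem_preimage]
        simp only [cylA, Set.mem_setOf_eq]
        constructor
        · intro h
          obtain ⟨j, h1, h2, h3⟩ := mem_Fev.1 h
          exact ⟨j, Finset.mem_Ico.2 ⟨h1, h2⟩, fun _ => h3⟩
        · rintro ⟨j, hj, h⟩
          have hj' := Finset.mem_Ico.1 hj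
          exact mem_Fev.2 ⟨j, hj'.1, hj'.2, h (Finset.mem_image_of_mem _ hj)⟩
      have hGB : (⋂ k ∈ Finset.range K, Fev n k)
          = (fun (ω : GraphOrderEdge → Bool) (i : T) => ω ↑i) ⁻¹' cylB n K T := by
        ext ω
        rw [Set.mem_preimage]
        simp only [cylB, Set.mem_setOf_eq, Set.mem_iInter]
        constructor
        · intro h k hk
          obtain ⟨j, h1, h2, h3⟩ := mem_Fev.1 (h k hk)
          exact ⟨j, Finset.mem_Ico.2 ⟨h1, h2⟩, fun _ => h3⟩
        · intro h k hk
          obtain ⟨j, hj, hh⟩ := h k hk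
          have hj' := Finset.mem_Ico.1 hj
          refine mem_Fev.2 ⟨j, hj'.1, hj'.2, hh ?_⟩
          exact Finset.mem_biUnion.2 ⟨k, hk, Finset.mem_image_of_mem _ hj⟩
      have hmul := hXY.measure_inter_preimage_eq_mul (cylA n K S) (cylB n K T)
        MeasurableSet.of_discrete MeasurableSet.of_discrete
      rw [hFA, hGB]
      exact hmul
  -- pass to the limit
  rw [event_eq n hn]
  have hiInter : (⋂ K, ⋂ k ∈ Finset.range K, Fev n k) = ⋂ k, Fev n k := by
    ext ω
    simp only [Set.mem_iInter]
    constructor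
    · intro h k
      exact h (k + 1) k (Finset.mem_range.2 (Nat.lt_succ_self k))
    · intro h K k _
      exact h k
  have hanti : Antitone (fun K => ⋂ k ∈ Finset.range K, Fev n k) := by
    intro a b hab
    refine Set.biInter_mono ?_ (fun k _ => subset_rfl)
    intro k hk
    exact Finset.mem_range.2 (lt_of_lt_of_le (Finset.mem_range.1 hk) hab)
  have hlim1 : Filter.Tendsto (fun K => μ (⋂ k ∈ Finset.range K, Fev n k))
      Filter.atTop (nhds (μ (⋂ k, Fev n k))) := by
    have := tendsto_measure_iInter_atTop (μ := μ)
      (s := fun K => ⋂ k ∈ Finset.range K, Fev n k)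
      (fun K => ((Finset.range K).measurableSet_biInter
        (fun k _ => hmeasF k)).nullMeasurableSet)
      hanti ⟨0, measure_ne_top μ _⟩
    rwa [hiInter] at this
  -- real-valued limit of partial products
  have hpos : ∀ i : ℕ, 0 < 1 - q ^ (i + 1) := by
    intro i
    have : q ^ (i + 1) < 1 := pow_lt_one₀ hq0.le hq1 (Nat.succ_ne_zero i)
    linarith
  have hlogsum : Summable (fun i : ℕ => Real.log (1 - q ^ (i + 1))) := by
    rw [← summable_neg_iff]
    have hbound : ∀ i : ℕ, -Real.log (1 - q ^ (i + 1)) ≤ q ^ i * (1 - q)⁻¹ := by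
      intro i
      have hx0 : 0 < q ^ (i + 1) := pow_pos hq0 _
      have hx1 : q ^ (i + 1) < 1 := pow_lt_one₀ hq0.le hq1 (Nat.succ_ne_zero i)
      have hxq : q ^ (i + 1) ≤ q ^ i := by
        rw [pow_succ]
        nlinarith [pow_nonneg hq0.le i]
      have h1 : -Real.log (1 - q ^ (i + 1)) = Real.log (1 - q ^ (i + 1))⁻¹ := by
        rw [Real.log_inv]
      have h2 : Real.log (1 - q ^ (i + 1))⁻¹ ≤ (1 - q ^ (i + 1))⁻¹ - 1 :=
        Real.log_le_sub_one_of_pos (inv_pos.2 (hpos i))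
      have hne : (1 : ℝ) - q ^ (i + 1) ≠ 0 := ne_of_gt (hpos i)
      have h3 : (1 - q ^ (i + 1))⁻¹ - 1 = q ^ (i + 1) / (1 - q ^ (i + 1)) := by
        rw [sub_eq_iff_eq_add, div_add_one hne, inv_eq_one_div]
        congr 1
        ring
      have hxq' : q ^ (i + 1) ≤ q := by
        calc q ^ (i + 1) ≤ q ^ 1 := pow_le_pow_of_le_one hq0.le hq1.le (by omega)
          _ = q := pow_one q
      have h4 : q ^ (i + 1) / (1 - q ^ (i + 1)) ≤ q ^ i / (1 - q) := by
        apply div_le_div₀ (pow_nonneg hq0.le i) hxq (by linarith)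
        linarith
      calc -Real.log (1 - q ^ (i + 1)) = Real.log (1 - q ^ (i + 1))⁻¹ := h1
        _ ≤ (1 - q ^ (i + 1))⁻¹ - 1 := h2
        _ = q ^ (i + 1) / (1 - q ^ (i + 1)) := h3
        _ ≤ q ^ i / (1 - q) := h4
        _ = q ^ i * (1 - q)⁻¹ := div_eq_mul_inv _ _
    refine Summable.of_nonneg_of_le (fun i => ?_) hbound
      ((summable_geometric_of_lt_one hq0.le hq1).mul_right _)
    have : Real.log (1 - q ^ (i + 1)) ≤ 0 := by
      apply Real.log_nonpos (by linarith [hpos i])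
      nlinarith [pow_pos hq0 (i + 1)]
    linarith
  have hhasprod : HasProd (fun i : ℕ => 1 - q ^ (i + 1)) (eulerKappa q) := by
    have := (Real.multipliable_of_summable_log hpos hlogsum).hasProd
    exact this
  have hlim2 : Filter.Tendsto (fun K => μ (⋂ k ∈ Finset.range K, Fev n k))
      Filter.atTop (nhds (ENNReal.ofReal (eulerKappa q))) := by
    have hreal : Filter.Tendsto (fun K => ∏ i ∈ Finset.range K, (1 - q ^ (i + 1)))
        Filter.atTop (nhds (eulerKappa q)) := hhasprod.tendsto_prod_nat
    have := (ENNReal.continuous_ofReal.tendsto (eulerKappa q)).comp hreal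
    refine this.congr (fun K => ?_)
    simp only [Function.comp_apply]
    rw [key K, ← ENNReal.ofReal_prod_of_nonneg (fun i _ => (hpos i).le)]
  exact tendsto_nhds_unique hlim1 hlim2
end

section
/- Let 0<p<1, q=1−p, and n≥1. In a random graph order on {1,2,…,n} with parameter p, for every 1≤k≤n the probability that the element k is a post equals λ_{k−1}(q)·λ_{n−k}(q). -/
open MeasureTheory ProbabilityTheory

/-- The index set of potential edges of a random graph order on `{1, 2, …, n}`:
pairs `(i, j)` with `1 ≤ i < j ≤ n`. -/
abbrev FinGraphOrderEdge (n : ℕ) : Type := {ij : ℕ × ℕ // 1 ≤ ij.1 ∧ ij.1 < ij.2 ∧ ij.2 ≤ n}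

/-- The random graph order relation `≺_ω` on `{1, …, n}`: the transitive closure of the
relation `{(i, j) : 1 ≤ i < j ≤ n and ω(i, j) = 1}`. -/
def FinGraphOrderRel {n : ℕ} (ω : FinGraphOrderEdge n → Bool) (a b : ℕ) : Prop :=
  Relation.TransGen (fun x y => ∃ h : 1 ≤ x ∧ x < y ∧ y ≤ n, ω ⟨(x, y), h⟩ = true) a b

/-- `k` is a post of the random graph order on `{1, …, n}` determined by `ω`: every other
element `m ∈ {1, …, n}` satisfies `m ≺_ω k` or `k ≺_ω m`. -/
def FinIsPost {n : ℕ} (ω : FinGraphOrderEdge n → Bool) (k : ℕ) : Prop :=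
  ∀ m : ℕ, 1 ≤ m → m ≤ n → m ≠ k → (FinGraphOrderRel ω m k ∨ FinGraphOrderRel ω k m)

/-- `μ` is the law of a random graph order on `{1, 2, …, n}` with parameter `p`:
a probability measure on edge configurations whose coordinates are independent
Bernoulli(`p`) random variables. -/
structure IsFinRandomGraphOrderMeasure {n : ℕ} (μ : Measure (FinGraphOrderEdge n → Bool))
    (p : ℝ) (hp : 0 < p ∧ p < 1) : Prop where
  isProb : IsProbabilityMeasure μ
  indep : iIndepFun (fun e (ω : FinGraphOrderEdge n → Bool) => ω e) μ
  bernoulli : ∀ e : FinGraphOrderEdge n, μ.map (fun ω => ω e) =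
    (PMF.bernoulli (Real.toNNReal p) (Real.toNNReal_le_one.mpr hp.2.le)).toMeasure

namespace RGOPost

/-- the one-step relation underlying `FinGraphOrderRel` -/
abbrev Step {n : ℕ} (ω : FinGraphOrderEdge n → Bool) (x y : ℕ) : Prop :=
  ∃ h : 1 ≤ x ∧ x < y ∧ y ≤ n, ω ⟨(x, y), h⟩ = true

lemma rel_lt {n : ℕ} {ω : FinGraphOrderEdge n → Bool} {a b : ℕ}
    (h : FinGraphOrderRel ω a b) : a < b := by
  induction h with
  | single h => obtain ⟨⟨_, h, _⟩, _⟩ := h; exact h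
  | tail _ h ih => obtain ⟨⟨_, h, _⟩, _⟩ := h; exact ih.trans h

lemma relrt_le {n : ℕ} {ω : FinGraphOrderEdge n → Bool} {a b : ℕ}
    (h : Relation.ReflTransGen (Step ω) a b) : a ≤ b := by
  induction h with
  | refl => exact le_rfl
  | tail _ h ih => obtain ⟨⟨_, h, _⟩, _⟩ := h; exact ih.trans h.le

/-- For `m < k`: the edges `(m, j)` with `m < j ≤ k`.
For `m > k`: the edges `(j, m)` with `k ≤ j < m`. -/
def postEdges (n k m : ℕ) : Finset (FinGraphOrderEdge n) :=
  if m < k then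
    ((Finset.Ioc m k).image fun j => ((m, j) : ℕ × ℕ)).subtype
      (fun ij : ℕ × ℕ => 1 ≤ ij.1 ∧ ij.1 < ij.2 ∧ ij.2 ≤ n)
  else
    ((Finset.Ico k m).image fun j => ((j, m) : ℕ × ℕ)).subtype
      (fun ij : ℕ × ℕ => 1 ≤ ij.1 ∧ ij.1 < ij.2 ∧ ij.2 ≤ n)

lemma mem_postEdges_lt {n k m : ℕ} (hmk : m < k) {e : FinGraphOrderEdge n} :
    e ∈ postEdges n k m ↔ e.1.1 = m ∧ e.1.2 ≤ k := by
  obtain ⟨⟨a, b⟩, h1, hab, hbn⟩ := e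
  simp only [postEdges, if_pos hmk, Finset.mem_subtype, Finset.mem_image, Finset.mem_Ioc]
  constructor
  · rintro ⟨j, ⟨hmj, hjk⟩, hEq⟩
    obtain ⟨rfl, rfl⟩ := Prod.mk.injEq .. ▸ hEq
    exact ⟨rfl, hjk⟩
  · rintro ⟨rfl, hbk⟩
    exact ⟨b, ⟨hab, hbk⟩, rfl⟩

lemma mem_postEdges_ge {n k m : ℕ} (hmk : ¬ m < k) {e : FinGraphOrderEdge n} :
    e ∈ postEdges n k m ↔ e.1.2 = m ∧ k ≤ e.1.1 := by
  obtain ⟨⟨a, b⟩, h1, hab, hbn⟩ := e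
  simp only [postEdges, if_neg hmk, Finset.mem_subtype, Finset.mem_image, Finset.mem_Ico]
  constructor
  · rintro ⟨j, ⟨hkj, hjm⟩, hEq⟩
    obtain ⟨rfl, rfl⟩ := Prod.mk.injEq .. ▸ hEq
    exact ⟨rfl, hkj⟩
  · rintro ⟨rfl, hka⟩
    exact ⟨a, ⟨hka, hab⟩, rfl⟩

lemma card_postEdges_lt {n k m : ℕ} (h1 : 1 ≤ m) (hmk : m < k) (hkn : k ≤ n) :
    (postEdges n k m).card = k - m := by
  rw [postEdges, if_pos hmk, Finset.card_subtype, Finset.filter_true_of_mem, 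
    Finset.card_image_of_injective _ (fun a b h => by simpa using congrArg Prod.snd h),
    Nat.card_Ioc]
  intro x hx
  simp only [Finset.mem_image, Finset.mem_Ioc] at hx
  obtain ⟨j, ⟨hmj, hjk⟩, rfl⟩ := hx
  exact ⟨h1, hmj, hjk.trans hkn⟩

lemma card_postEdges_ge {n k m : ℕ} (h1 : 1 ≤ k) (hkm : k < m) (hmn : m ≤ n) :
    (postEdges n k m).card = m - k := by
  rw [postEdges, if_neg (by omega), Finset.card_subtype, Finset.filter_true_of_mem,
    Finset.card_image_of_injective _ (fun a b h => by simpa using congrArg Prod.fst h),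
    Nat.card_Ico]
  intro x hx
  simp only [Finset.mem_image, Finset.mem_Ico] at hx
  obtain ⟨j, ⟨hkj, hjm⟩, rfl⟩ := hx
  exact ⟨h1.trans hkj, hjm, hmn⟩

/-- The event that at least one edge in `S` is present. -/
def Ev {n : ℕ} (S : Finset (FinGraphOrderEdge n)) : Set (FinGraphOrderEdge n → Bool) :=
  ⋃ e ∈ (S : Set (FinGraphOrderEdge n)), (fun ω => ω e) ⁻¹' {true}

lemma mem_Ev {n : ℕ} {S : Finset (FinGraphOrderEdge n)} {ω : FinGraphOrderEdge n → Bool} :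
    ω ∈ Ev S ↔ ∃ e ∈ S, ω e = true := by
  simp [Ev]

/-- Characterization of being a post in terms of the edge events. -/
lemma isPost_iff {n k : ℕ} (hk1 : 1 ≤ k) (hkn : k ≤ n) (ω : FinGraphOrderEdge n → Bool) :
    FinIsPost ω k ↔ ∀ m, (1 ≤ m ∧ m ≤ n ∧ m ≠ k) → ∃ e ∈ postEdges n k m, ω e = true := by
  constructor
  · intro hpost m ⟨hm1, hmn, hmk⟩
    rcases hpost m hm1 hmn hmk with h | h
    · have hmk' : m < k := rel_lt h
      obtain ⟨j, hj, hjk⟩ := Relation.TransGen.head'_iff.mp h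
      obtain ⟨⟨h1, hlt, hle⟩, hω⟩ := hj
      refine ⟨⟨(m, j), ⟨h1, hlt, hle⟩⟩, ?_, hω⟩
      rw [mem_postEdges_lt hmk']
      exact ⟨rfl, relrt_le hjk⟩
    · have hkm : k < m := rel_lt h
      obtain ⟨j, hkj, hj⟩ := Relation.TransGen.tail'_iff.mp h
      obtain ⟨⟨h1, hlt, hle⟩, hω⟩ := hj
      refine ⟨⟨(j, m), ⟨h1, hlt, hle⟩⟩, ?_, hω⟩
      rw [mem_postEdges_ge (by omega)]
      exact ⟨rfl, relrt_le hkj⟩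
  · intro hE
    have down : ∀ d m, 1 ≤ m → m < k → k - m ≤ d → FinGraphOrderRel ω m k := by
      intro d
      induction d with
      | zero => intro m _ h2 h3; omega
      | succ d ih =>
        intro m h1 h2 h3
        obtain ⟨e, he, hω⟩ := hE m ⟨h1, by omega, by omega⟩
        rw [mem_postEdges_lt h2] at he
        obtain ⟨⟨a, b⟩, hcond⟩ := e
        obtain ⟨heq, hbk⟩ := he
        simp only at heq hbk
        subst heq
        rcases eq_or_lt_of_le hbk with heq | hblt
        · subst heq
          exact Relation.TransGen.single ⟨hcond, hω⟩
        · have hab : a < b := hcond.2.1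
          exact Relation.TransGen.head ⟨hcond, hω⟩
            (ih b (by omega) hblt (by omega))
    have up : ∀ d m, m ≤ n → k < m → m - k ≤ d → FinGraphOrderRel ω k m := by
      intro d
      induction d with
      | zero => intro m _ h2 h3; omega
      | succ d ih =>
        intro m hmn h2 h3
        obtain ⟨e, he, hω⟩ := hE m ⟨by omega, hmn, by omega⟩
        rw [mem_postEdges_ge (by omega)] at he
        obtain ⟨⟨a, b⟩, hcond⟩ := e
        obtain ⟨heq, hka⟩ := he
        simp only at heq hka
        subst heq
        rcases eq_or_lt_of_le hka with heq | hka'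
        · subst heq
          exact Relation.TransGen.single ⟨hcond, hω⟩
        · have hab : a < b := hcond.2.1
          exact Relation.TransGen.tail
            (ih a (by omega) hka' (by omega)) ⟨hcond, hω⟩
    intro m hm1 hmn hmk
    rcases lt_or_gt_of_ne hmk with h | h
    · exact Or.inl (down (k - m) m hm1 h le_rfl)
    · exact Or.inr (up (m - k) m hmn h le_rfl)

/-- Intersections of events depending on pairwise disjoint edge sets factorize. -/
lemma meas_biInter_Ev {n : ℕ} (μ : Measure (FinGraphOrderEdge n → Bool))
    [IsProbabilityMeasure μ]
    (hind : iIndepFun (fun (e : FinGraphOrderEdge n) ω => ω e) μ)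
    (T : Finset ℕ) (S : ℕ → Finset (FinGraphOrderEdge n))
    (hd : ∀ a ∈ T, ∀ b ∈ T, a ≠ b → ∀ e, e ∈ S a → e ∉ S b) :
    μ (⋂ m ∈ T, Ev (S m)) = ∏ m ∈ T, μ (Ev (S m)) := by
  classical
  induction T using Finset.induction_on with
  | empty => simp
  | @insert a T haT ih =>
    have hd' : ∀ a' ∈ T, ∀ b ∈ T, a' ≠ b → ∀ e, e ∈ S a' → e ∉ S b := fun a' ha' b hb hne =>
      hd a' (Finset.mem_insert_of_mem ha') b (Finset.mem_insert_of_mem hb) hne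
    have h_le : ∀ e : FinGraphOrderEdge n,
        MeasurableSpace.comap (fun ω : FinGraphOrderEdge n → Bool => ω e) inferInstance ≤
          MeasurableSpace.pi :=
      fun e => (measurable_pi_apply e).comap_le
    have hST : Disjoint ((S a : Set (FinGraphOrderEdge n)))
        (⋃ m ∈ (T : Set ℕ), (S m : Set (FinGraphOrderEdge n))) := by
      rw [Set.disjoint_left]
      rintro e he hmem
      simp only [Set.mem_iUnion, Finset.mem_coe] at hmem he
      obtain ⟨b, hb, heb⟩ := hmem
      exact hd a (Finset.mem_insert_self _ _) b (Finset.mem_insert_of_mem hb)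
        (by rintro rfl; exact haT hb) e he heb
    have hIndep := indep_iSup_of_disjoint h_le hind.iIndep hST
    have hmeasA : MeasurableSet[⨆ e ∈ (S a : Set (FinGraphOrderEdge n)),
        MeasurableSpace.comap (fun ω : FinGraphOrderEdge n → Bool => ω e) inferInstance]
        (Ev (S a)) := by
      refine MeasurableSet.biUnion (S a).countable_toSet fun e he => ?_
      exact (le_iSup₂ (f := fun (e : FinGraphOrderEdge n)
        (_ : e ∈ (S a : Set (FinGraphOrderEdge n))) =>
          MeasurableSpace.comap (fun ω : FinGraphOrderEdge n → Bool => ω e) inferInstance) e he)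
        _ ⟨{true}, MeasurableSet.singleton true, rfl⟩
    have hmeasB : MeasurableSet[⨆ e ∈ (⋃ m ∈ (T : Set ℕ), (S m : Set (FinGraphOrderEdge n))),
        MeasurableSpace.comap (fun ω : FinGraphOrderEdge n → Bool => ω e) inferInstance]
        (⋂ m ∈ T, Ev (S m)) := by
      rw [← Finset.set_biInter_coe]
      refine MeasurableSet.biInter T.countable_toSet fun b hb => ?_
      refine MeasurableSet.biUnion (S b).countable_toSet fun e he => ?_
      have hmem : e ∈ ⋃ m ∈ (T : Set ℕ), (S m : Set (FinGraphOrderEdge n)) := by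
        exact Set.mem_biUnion hb he
      exact (le_iSup₂ (f := fun (e : FinGraphOrderEdge n)
        (_ : e ∈ ⋃ m ∈ (T : Set ℕ), (S m : Set (FinGraphOrderEdge n))) =>
          MeasurableSpace.comap (fun ω : FinGraphOrderEdge n → Bool => ω e) inferInstance) e hmem)
        _ ⟨{true}, MeasurableSet.singleton true, rfl⟩
    rw [Finset.set_biInter_insert, Finset.prod_insert haT,
      (Indep_iff _ _ _).mp hIndep _ _ hmeasA hmeasB, ih hd']

/-- Probability that at least one of the edges of `S` is present. -/
lemma meas_Ev {n : ℕ} {p : ℝ} {hp : 0 < p ∧ p < 1}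
    {μ : Measure (FinGraphOrderEdge n → Bool)} (hμ : IsFinRandomGraphOrderMeasure μ p hp)
    (S : Finset (FinGraphOrderEdge n)) :
    μ (Ev S) = ENNReal.ofReal (1 - (1 - p) ^ S.card) := by
  haveI := hμ.isProb
  have hq0 : (0 : ℝ) ≤ 1 - p := by linarith [hp.2]
  have hcompl : (Ev S)ᶜ = ⋂ e ∈ S, (fun ω : FinGraphOrderEdge n → Bool => ω e) ⁻¹' {false} := by
    ext ω
    simp [Ev, Bool.not_eq_true]
  have hmeas_compl : MeasurableSet ((Ev S)ᶜ) := by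
    rw [hcompl, ← Finset.set_biInter_coe]
    exact MeasurableSet.biInter S.countable_toSet fun e _ =>
      (measurable_pi_apply e) (MeasurableSet.singleton false)
  have hμc : μ ((Ev S)ᶜ) = ENNReal.ofReal (1 - p) ^ S.card := by
    rw [hcompl, hμ.indep.meas_biInter
      (fun e _ => ⟨{false}, MeasurableSet.singleton false, rfl⟩)]
    have hone : ∀ e ∈ S, μ ((fun ω : FinGraphOrderEdge n → Bool => ω e) ⁻¹' {false})
        = ENNReal.ofReal (1 - p) := by
      intro e _
      rw [← Measure.map_apply (measurable_pi_apply e) (MeasurableSet.singleton false),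
        hμ.bernoulli e,
        PMF.toMeasure_apply_singleton _ _ (MeasurableSet.singleton false),
        PMF.bernoulli_apply]
      simp only [Bool.cond_false]
      rw [ENNReal.ofReal_sub _ hp.1.le]
      simp
      rfl
    rw [Finset.prod_congr rfl hone, Finset.prod_const]
  rw [← compl_compl (Ev S), prob_compl_eq_one_sub hmeas_compl, hμc,
    ← ENNReal.ofReal_pow hq0, ENNReal.ofReal_sub _ (pow_nonneg hq0 _), ENNReal.ofReal_one]

end RGOPost

open RGOPost in
/-- In a random graph order on `{1, 2, …, n}` with parameter `0 < p < 1`, `q = 1 - p`, and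
`n ≥ 1`, for every `1 ≤ k ≤ n` the probability that `k` is a post equals
`λ_{k-1}(q) · λ_{n-k}(q)`. -/
theorem fin_prob_isPost_eq (p q : ℝ) (hp : 0 < p ∧ p < 1) (hq : q = 1 - p)
    (n : ℕ) (hn : 1 ≤ n) (μ : Measure (FinGraphOrderEdge n → Bool))
    (hμ : IsFinRandomGraphOrderMeasure μ p hp) (k : ℕ) (hk1 : 1 ≤ k) (hkn : k ≤ n) :
    μ {ω | FinIsPost ω k} = ENNReal.ofReal (eulerLam q (k - 1) * eulerLam q (n - k)) := by
  classical
  haveI := hμ.isProb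
  have hq0 : (0 : ℝ) ≤ q := by rw [hq]; linarith [hp.2]
  have hq1 : q ≤ 1 := by rw [hq]; linarith [hp.1]
  set T : Finset ℕ := Finset.Icc 1 (k - 1) ∪ Finset.Icc (k + 1) n with hT
  have hmemT : ∀ m, m ∈ T ↔ (1 ≤ m ∧ m ≤ n ∧ m ≠ k) := by
    intro m
    simp only [hT, Finset.mem_union, Finset.mem_Icc]
    omega
  have hset : {ω : FinGraphOrderEdge n → Bool | FinIsPost ω k}
      = ⋂ m ∈ T, Ev (postEdges n k m) := by
    ext ω
    simp only [Set.mem_setOf_eq, Set.mem_iInter, isPost_iff hk1 hkn, mem_Ev]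
    constructor
    · intro h m hm; exact h m ((hmemT m).mp hm)
    · intro h m hm; exact h m ((hmemT m).mpr hm)
  have hdisj : ∀ a ∈ T, ∀ b ∈ T, a ≠ b → ∀ e, e ∈ postEdges n k a → e ∉ postEdges n k b := by
    intro a ha b hb hne e hea heb
    obtain ⟨ha1, han, hak⟩ := (hmemT a).mp ha
    obtain ⟨hb1, hbn, hbk⟩ := (hmemT b).mp hb
    by_cases hak' : a < k <;> by_cases hbk' : b < k
    · rw [mem_postEdges_lt hak'] at hea
      rw [mem_postEdges_lt hbk'] at heb
      omega
    · rw [mem_postEdges_lt hak'] at hea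
      rw [mem_postEdges_ge hbk'] at heb
      omega
    · rw [mem_postEdges_ge hak'] at hea
      rw [mem_postEdges_lt hbk'] at heb
      omega
    · rw [mem_postEdges_ge hak'] at hea
      rw [mem_postEdges_ge hbk'] at heb
      omega
  rw [hset, meas_biInter_Ev μ hμ.indep T (fun m => postEdges n k m) hdisj]
  have hfac : ∀ m ∈ T, μ (Ev (postEdges n k m))
      = ENNReal.ofReal (1 - q ^ (if m < k then k - m else m - k)) := by
    intro m hm
    obtain ⟨hm1, hmn, hmk⟩ := (hmemT m).mp hm
    rw [meas_Ev hμ, ← hq]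
    by_cases hmk' : m < k
    · rw [card_postEdges_lt hm1 hmk' hkn, if_pos hmk']
    · rw [card_postEdges_ge hk1 (by omega) hmn, if_neg hmk']
  rw [Finset.prod_congr rfl hfac,
    ← ENNReal.ofReal_prod_of_nonneg (fun m _ => by
      have := pow_le_one₀ hq0 hq1 (n := if m < k then k - m else m - k); linarith)]
  congr 1
  have hTdisj : Disjoint (Finset.Icc 1 (k - 1)) (Finset.Icc (k + 1) n) := by
    rw [Finset.disjoint_left]
    intro m hm hm'
    simp only [Finset.mem_Icc] at hm hm'
    omega
  rw [hT, Finset.prod_union hTdisj]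
  have h1 : ∏ m ∈ Finset.Icc 1 (k - 1), (1 - q ^ (if m < k then k - m else m - k))
      = eulerLam q (k - 1) := by
    rw [eulerLam]
    refine Finset.prod_nbij' (fun m => k - 1 - m) (fun i => k - 1 - i) ?_ ?_ ?_ ?_ ?_
    · intro m hm; simp only [Finset.mem_Icc] at hm; simp only [Finset.mem_range]; omega
    · intro i hi; simp only [Finset.mem_range] at hi; simp only [Finset.mem_Icc]; omega
    · intro m hm; simp only [Finset.mem_Icc] at hm; omega
    · intro i hi; simp only [Finset.mem_range] at hi; omega
    · intro m hm
      simp only [Finset.mem_Icc] at hm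
      rw [if_pos (by omega)]
      congr 2
      omega
  have h2 : ∏ m ∈ Finset.Icc (k + 1) n, (1 - q ^ (if m < k then k - m else m - k))
      = eulerLam q (n - k) := by
    rw [eulerLam]
    refine Finset.prod_nbij' (fun m => m - k - 1) (fun i => k + 1 + i) ?_ ?_ ?_ ?_ ?_
    · intro m hm; simp only [Finset.mem_Icc] at hm; simp only [Finset.mem_range]; omega
    · intro i hi; simp only [Finset.mem_range] at hi; simp only [Finset.mem_Icc]; omega
    · intro m hm; simp only [Finset.mem_Icc] at hm; omega
    · intro i hi; simp only [Finset.mem_range] at hi; omega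
    · intro m hm
      simp only [Finset.mem_Icc] at hm
      rw [if_neg (by omega)]
      congr 2
      omega
  rw [h1, h2]
end

section
/- For all 0<q<1 and all integers n≥2, (λ_{n−1}(q) − q^n)·S_n(q) < q^n, where S_n(q) = Σ_{k=1}^{∞} q^{nk}/λ_k(q). -/
/-- The tail product `μ_n(q) = ∏_{i=n}^∞ (1 - q^i)`. -/
noncomputable def eulerMu (q : ℝ) (n : ℕ) : ℝ := ∏' i : ℕ, (1 - q ^ (n + i))

/-- The offset `b_n(q) = Σ_{k=1}^n λ_{k-1}(q) λ_{n-k}(q) - n κ(q)²`, the expected number of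
posts in a random graph order on `n` elements minus `n κ(q)²`. -/
noncomputable def postOffset (q : ℝ) (n : ℕ) : ℝ :=
  (∑ k ∈ Finset.Icc 1 n, eulerLam q (k - 1) * eulerLam q (n - k)) - n * eulerKappa q ^ 2

/-- For all `0 < q < 1` and all integers `n ≥ 2`,
`(λ_{n-1}(q) - q^n) · S_n(q) < q^n`, where `S_n(q) = Σ_{k=1}^∞ q^{nk}/λ_k(q)`. -/
theorem lam_sub_pow_mul_S_lt (q : ℝ) (hq0 : 0 < q) (hq1 : q < 1) (n : ℕ) (hn : 2 ≤ n) :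
    (eulerLam q (n - 1) - q ^ n) * (∑' k : ℕ, q ^ (n * (k + 1)) / eulerLam q (k + 1)) < q ^ n := by
  set L := eulerLam q with hLdef
  have hq0' := hq0.le
  have hfac : ∀ i : ℕ, 0 < 1 - q ^ (i + 1) := by
    intro i
    have : q ^ (i + 1) < 1 := pow_lt_one₀ hq0' hq1 (Nat.succ_ne_zero i)
    linarith
  have hLpos : ∀ k, 0 < L k := fun k => Finset.prod_pos (fun i _ => hfac i)
  have hLsucc : ∀ k, L (k + 1) = L k * (1 - q ^ (k + 1)) := fun k =>
    Finset.prod_range_succ _ _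
  have hL0 : L 0 = 1 := Finset.prod_range_zero _
  have hLle : ∀ k, L (k + 1) ≤ 1 - q := by
    intro k
    induction k with
    | zero => simp [hLsucc 0, hL0]
    | succ k ih =>
      rw [hLsucc (k + 1)]
      nlinarith [ih, hLpos (k + 1), hfac (k + 1),
        mul_nonneg (hLpos (k + 1)).le (pow_nonneg hq0' (k + 1 + 1))]
  have hqn1 : q ^ n < 1 := pow_lt_one₀ hq0' hq1 (by omega)
  have hqnpos : 0 < q ^ n := pow_pos hq0 n
  have hLn : L (n - 1) ≤ 1 - q := by
    obtain ⟨m, rfl⟩ : ∃ m, n = m + 2 := ⟨n - 2, by omega⟩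
    simpa using hLle m
  -- the basic sequence
  set h : ℕ → ℝ := fun k => q ^ (n * k) / L k with hhdef
  have hhpos : ∀ k, 0 < h k := fun k => div_pos (pow_pos hq0 _) (hLpos k)
  have hstep : ∀ k, h (k + 1) = h k * (q ^ n / (1 - q ^ (k + 1))) := by
    intro k
    simp only [hhdef]
    rw [hLsucc k, Nat.mul_succ, pow_add]
    field_simp
  -- summability via ratio test
  have hsum : Summable h := by
    apply summable_of_ratio_norm_eventually_le (r := (1 + q ^ n) / 2) (by linarith)
    have htend : Filter.Tendsto (fun k : ℕ => q ^ k) Filter.atTop (nhds 0) :=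
      tendsto_pow_atTop_nhds_zero_of_lt_one hq0' hq1
    have hev : ∀ᶠ k : ℕ in Filter.atTop, q ^ k ≤ (1 - q ^ n) / 2 :=
      htend.eventually (eventually_le_nhds (by linarith))
    filter_upwards [hev] with k hk
    rw [Real.norm_eq_abs, Real.norm_eq_abs, abs_of_pos (hhpos _), abs_of_pos (hhpos _),
      hstep k]
    have hk1 : q ^ (k + 1) ≤ (1 - q ^ n) / 2 := by
      have : q ^ (k + 1) ≤ q ^ k := pow_le_pow_of_le_one hq0' hq1.le (by omega)
      linarith
    have hd := hfac k
    have hratio : q ^ n / (1 - q ^ (k + 1)) ≤ (1 + q ^ n) / 2 := by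
      rw [div_le_div_iff₀ hd (by norm_num)]
      nlinarith [pow_pos hq0 (k + 1)]
    have := hhpos k
    nlinarith [hhpos k]
  have hsumtail : Summable (fun k => h (k + 1)) := (summable_nat_add_iff 1).2 hsum
  -- termwise comparison: f k ≤ g k
  have hkey : ∀ k : ℕ, L (n - 1) ≤ 1 - q ^ (k + 1) := by
    intro k
    have : q ^ (k + 1) ≤ q := by
      have := pow_le_pow_of_le_one hq0' hq1.le (show 1 ≤ k + 1 by omega)
      simpa using this
    linarith
  have hle : ∀ k : ℕ, L (n - 1) * h (k + 1) ≤ q ^ n * h k := by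
    intro k
    rw [hstep k]
    have hd := hfac k
    have h1 : L (n - 1) * (q ^ n / (1 - q ^ (k + 1))) ≤ q ^ n := by
      rw [mul_div_assoc', div_le_iff₀ hd]
      nlinarith [hkey k, hLpos (n - 1)]
    nlinarith [hhpos k, h1, hLpos (n - 1), div_pos hqnpos hd]
  have hstrict : L (n - 1) * h (1 + 1) < q ^ n * h 1 := by
    rw [hstep 1]
    have hd := hfac 1
    have hq2 : q ^ (1 + 1) < q := by rw [pow_succ, pow_one]; nlinarith
    have h1 : L (n - 1) * (q ^ n / (1 - q ^ (1 + 1))) < q ^ n := by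
      rw [mul_div_assoc', div_lt_iff₀ hd]
      nlinarith [hLpos (n - 1)]
    nlinarith [hhpos 1, h1, div_pos hqnpos hd]
  have hf : Summable (fun k => L (n - 1) * h (k + 1)) := hsumtail.mul_left _
  have hg : Summable (fun k => q ^ n * h k) := hsum.mul_left _
  have hlt : (∑' k, L (n - 1) * h (k + 1)) < ∑' k, q ^ n * h k :=
    Summable.tsum_lt_tsum hle hstrict hf hg
  have e1 : (∑' k, L (n - 1) * h (k + 1)) = L (n - 1) * ∑' k, h (k + 1) := tsum_mul_left
  have e2 : (∑' k, q ^ n * h k) = q ^ n * ∑' k, h k := tsum_mul_left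
  have e3 : (∑' k, h k) = 1 + ∑' k, h (k + 1) := by
    rw [Summable.tsum_eq_zero_add hsum]
    congr 1
    simp [hhdef, hL0]
  have hS : (∑' k : ℕ, q ^ (n * (k + 1)) / eulerLam q (k + 1)) = ∑' k, h (k + 1) := rfl
  rw [hS]
  set S := ∑' k, h (k + 1)
  rw [e1, e2, e3] at hlt
  nlinarith [hlt]
end

section
/- For all 0<q<1 and all integers n≥2, the partial product of the Euler function satisfies λ_{n−1}(q) − κ(q) < q^n. -/
open Finset Filter

section aux

lemma aux_prod_antitone {f : ℕ → ℝ} (h0 : ∀ i, 0 ≤ f i) (h1 : ∀ i, f i ≤ 1) :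
    Antitone (fun s : Finset ℕ => ∏ i ∈ s, f i) := by
  intro s t hst
  have := Finset.prod_sdiff (f := f) hst
  have h2 : ∏ i ∈ t \ s, f i ≤ 1 := Finset.prod_le_one (fun i _ => h0 i) (fun i _ => h1 i)
  have h3 : 0 ≤ ∏ i ∈ s, f i := Finset.prod_nonneg (fun i _ => h0 i)
  calc ∏ i ∈ t, f i = (∏ i ∈ t \ s, f i) * ∏ i ∈ s, f i := this.symm
    _ ≤ 1 * ∏ i ∈ s, f i := mul_le_mul_of_nonneg_right h2 h3
    _ = ∏ i ∈ s, f i := one_mul _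

lemma aux_multipliable {f : ℕ → ℝ} (h0 : ∀ i, 0 ≤ f i) (h1 : ∀ i, f i ≤ 1) :
    Multipliable f := by
  refine ⟨⨅ s : Finset ℕ, ∏ i ∈ s, f i, ?_⟩
  exact tendsto_atTop_ciInf (aux_prod_antitone h0 h1)
    ⟨0, by rintro x ⟨s, rfl⟩; exact Finset.prod_nonneg (fun i _ => h0 i)⟩

lemma aux_tprod_le_one {f : ℕ → ℝ} (h0 : ∀ i, 0 ≤ f i) (h1 : ∀ i, f i ≤ 1) :
    ∏' i, f i ≤ 1 := by
  refine le_of_tendsto (aux_multipliable h0 h1).hasProd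
    (Filter.Eventually.of_forall fun s => ?_)
  exact Finset.prod_le_one (fun i _ => h0 i) (fun i _ => h1 i)

lemma aux_weier {a : ℕ → ℝ} (h0 : ∀ i, 0 ≤ a i) (h1 : ∀ i, a i ≤ 1) (s : Finset ℕ) :
    1 - ∑ i ∈ s, a i ≤ ∏ i ∈ s, (1 - a i) := by
  induction s using Finset.induction with
  | empty => simp
  | @insert x s hx ih =>
    rw [Finset.prod_insert hx, Finset.sum_insert hx]
    have hs : 0 ≤ ∑ i ∈ s, a i := Finset.sum_nonneg (fun i _ => h0 i)
    nlinarith [h0 x, h1 x, ih]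

lemma aux_weier_tprod {a : ℕ → ℝ} (h0 : ∀ i, 0 ≤ a i) (h1 : ∀ i, a i ≤ 1)
    (hsum : Summable a) : 1 - ∑' i, a i ≤ ∏' i, (1 - a i) := by
  have hm : Multipliable fun i => 1 - a i :=
    aux_multipliable (fun i => by linarith [h1 i]) (fun i => by linarith [h0 i])
  refine ge_of_tendsto hm.hasProd (Filter.Eventually.of_forall fun s => ?_)
  calc 1 - ∑' i, a i ≤ 1 - ∑ i ∈ s, a i := by
        linarith [Summable.sum_le_tsum s (fun i _ => h0 i) hsum]
    _ ≤ ∏ i ∈ s, (1 - a i) := aux_weier h0 h1 s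

end aux

/-- For all `0 < q < 1` and all integers `n ≥ 2`, `λ_{n-1}(q) - κ(q) < q^n`. -/
theorem lam_sub_kappa_lt (q : ℝ) (hq0 : 0 < q) (hq1 : q < 1) (n : ℕ) (hn : 2 ≤ n) :
    eulerLam q (n - 1) - eulerKappa q < q ^ n := by
  set f : ℕ → ℝ := fun i => 1 - q ^ (i + 1) with hf_def
  have hpow : ∀ k : ℕ, 0 < q ^ k := fun k => pow_pos hq0 k
  have hpow1 : ∀ k : ℕ, 1 ≤ k → q ^ k < 1 := fun k hk =>
    pow_lt_one₀ hq0.le hq1 (by omega)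
  have hf0 : ∀ i, 0 ≤ f i := fun i => by
    have := hpow1 (i + 1) (by omega); simp only [hf_def]; linarith
  have hf1 : ∀ i, f i ≤ 1 := fun i => by
    have := hpow (i + 1); simp only [hf_def]; linarith
  have hf : Multipliable f := aux_multipliable hf0 hf1
  obtain ⟨m, rfl⟩ : ∃ m, n = m + 1 := ⟨n - 1, by omega⟩
  have hm : 1 ≤ m := by omega
  -- split κ = λ_m * μ
  have hshift : ∀ k : ℕ, Multipliable fun i => f (i + k) := fun k =>
    aux_multipliable (fun i => hf0 _) (fun i => hf1 _)
  have hsplit : (∏ i ∈ Finset.range m, f i) * (∏' i, f (i + m)) = eulerKappa q :=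
    Multipliable.prod_mul_tprod_nat_mul' (hshift m)
  set lam := ∏ i ∈ Finset.range m, f i with hlam_def
  have hlam_eq : eulerLam q (m + 1 - 1) = lam := by
    simp [eulerLam, hlam_def, hf_def]
  set mu := ∏' i, f (i + m) with hmu_def
  -- mu = (1 - q^(m+1)) * nu
  have hmu_split : mu = f m * ∏' i, f (i + 1 + m) := by
    have := tprod_eq_zero_mul' (f := fun i => f (i + m))
      (aux_multipliable (f := fun i => f (i + 1 + m)) (fun i => hf0 _) (fun i => hf1 _))
    simpa [hmu_def, add_right_comm] using this
  set nu := ∏' i, f (i + 1 + m) with hnu_def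
  -- bounds on nu
  have ha0 : ∀ i : ℕ, 0 ≤ q ^ (i + 1 + m + 1) := fun i => (hpow _).le
  have ha1 : ∀ i : ℕ, q ^ (i + 1 + m + 1) ≤ 1 := fun i => (hpow1 _ (by omega)).le
  have hsumm : Summable fun i : ℕ => q ^ (i + 1 + m + 1) := by
    have : (fun i : ℕ => q ^ (i + 1 + m + 1)) = fun i : ℕ => q ^ (m + 2) * q ^ i := by
      funext i; rw [← pow_add]; ring_nf
    rw [this]
    exact (summable_geometric_of_lt_one hq0.le hq1).mul_left _
  have htsum : ∑' i : ℕ, q ^ (i + 1 + m + 1) = q ^ (m + 2) * (1 - q)⁻¹ := by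
    have : (fun i : ℕ => q ^ (i + 1 + m + 1)) = fun i : ℕ => q ^ (m + 2) * q ^ i := by
      funext i; rw [← pow_add]; ring_nf
    rw [this, tsum_mul_left, tsum_geometric_of_lt_one hq0.le hq1]
  have hnu_lb : 1 - q ^ (m + 2) * (1 - q)⁻¹ ≤ nu := by
    have := aux_weier_tprod ha0 ha1 hsumm
    rw [htsum] at this
    simpa [hnu_def, hf_def] using this
  have hnu_ub : nu ≤ 1 := aux_tprod_le_one (fun i => hf0 _) (fun i => hf1 _)
  have hnu_lb0 : 0 ≤ nu := by
    refine ge_of_tendsto (aux_multipliable (f := fun i => f (i + 1 + m))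
      (fun i => hf0 _) (fun i => hf1 _)).hasProd
      (Filter.Eventually.of_forall fun s => Finset.prod_nonneg fun i _ => hf0 _)
  -- bounds on lam
  have hlam0 : 0 ≤ lam := Finset.prod_nonneg fun i _ => hf0 i
  have hlam_ub : lam ≤ 1 - q := by
    obtain ⟨k, rfl⟩ : ∃ k, m = k + 1 := ⟨m - 1, by omega⟩
    rw [hlam_def, Finset.prod_range_succ']
    have h1 : ∏ i ∈ Finset.range k, f (i + 1) ≤ 1 :=
      Finset.prod_le_one (fun i _ => hf0 _) (fun i _ => hf1 _)
    have h2 : f 0 = 1 - q := by simp [hf_def]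
    rw [h2]
    have h3 : 0 ≤ 1 - q := by linarith
    nlinarith [Finset.prod_nonneg (s := Finset.range k) (f := fun i => f (i + 1))
      (fun i _ => hf0 _)]
  -- hT
  have hq1' : (1 - q) ≠ 0 := by linarith
  have hT : (1 - q) * (q ^ (m + 2) * (1 - q)⁻¹) = q ^ (m + 2) := by
    field_simp
  have hfm : f m = 1 - q ^ (m + 1) := by simp [hf_def]
  rw [hlam_eq, ← hsplit]
  have hμ1 : mu ≤ 1 := by
    rw [hmu_split, hfm]
    nlinarith [hpow (m + 1), hpow1 (m + 1) (by omega)]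
  have hμlb : (1 - q ^ (m + 1)) * (1 - q ^ (m + 2) * (1 - q)⁻¹) ≤ mu := by
    rw [hmu_split, hfm]
    have : 0 ≤ 1 - q ^ (m + 1) := by linarith [hpow1 (m + 1) (by omega)]
    exact mul_le_mul_of_nonneg_left hnu_lb this
  set T := q ^ (m + 2) * (1 - q)⁻¹ with hT_def
  have hT0 : 0 ≤ T := mul_nonneg (hpow _).le (inv_pos.2 (by linarith)).le
  have key : lam - lam * mu ≤ q ^ (m + 1) - q ^ (m + 1) * q ^ (m + 2) := by
    have h1 : lam * (1 - mu) ≤ (1 - q) * (1 - mu) :=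
      mul_le_mul_of_nonneg_right hlam_ub (by linarith)
    have h2 : (1 - q) * (1 - (1 - q ^ (m + 1)) * (1 - T)) ≤ (1 - q) * (1 - mu) →
        True := fun _ => trivial
    have h3 : (1 - q) * (1 - mu) ≤ (1 - q) * (1 - (1 - q ^ (m + 1)) * (1 - T)) :=
      mul_le_mul_of_nonneg_left (by linarith) (by linarith)
    have hexp : (1 - q) * (1 - (1 - q ^ (m + 1)) * (1 - T))
        = q ^ (m + 1) - q ^ (m + 1) * q ^ (m + 2) := by
      linear_combination (1 - q ^ (m + 1)) * hT
    nlinarith [h1, h3, hexp]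
  have : 0 < q ^ (m + 1) * q ^ (m + 2) := mul_pos (hpow _) (hpow _)
  linarith
end

section
/- For all complex numbers x, z with |x|<1 and |z|<1, the following identity holds: ∏_{m=1}^{∞}(1−x^m z) = ( Σ_{k=0}^{∞} x^k z^k / ∏_{i=1}^{k}(1−x^i) )^{−1}; equivalently, ∏_{m=1}^{∞}(1−x^m z) · Σ_{k=0}^{∞} (x z)^k / ∏_{i=1}^{k}(1−x^i) = 1 (both the product and the series converge, and the series sum is nonzero). -/
open Finset Filter Topology

lemma euler_aux_cancel (a b u : ℂ) (hu : u ≠ 0) (hb : b ≠ 0) :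
    a / (b * u) * u = a / b := by
  field_simp

lemma euler_aux_prod_one_sub_ge (f : ℕ → ℝ) (s : Finset ℕ) (h0 : ∀ i ∈ s, 0 ≤ f i)
    (h1 : ∀ i ∈ s, f i ≤ 1) : 1 - ∑ i ∈ s, f i ≤ ∏ i ∈ s, (1 - f i) := by
  induction s using Finset.induction with
  | empty => simp
  | @insert a s ha ih =>
    rw [Finset.prod_insert ha, Finset.sum_insert ha]
    have h0a := h0 a (Finset.mem_insert_self a s)
    have h1a := h1 a (Finset.mem_insert_self a s)
    have ih' := ih (fun i hi => h0 i (Finset.mem_insert_of_mem hi))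
      (fun i hi => h1 i (Finset.mem_insert_of_mem hi))
    have hs0 : (0:ℝ) ≤ ∑ i ∈ s, f i :=
      Finset.sum_nonneg (fun i hi => h0 i (Finset.mem_insert_of_mem hi))
    nlinarith [mul_le_mul_of_nonneg_left ih' (by linarith : (0:ℝ) ≤ 1 - f a)]

noncomputable def eulerD (x : ℂ) (k : ℕ) : ℂ := ∏ i ∈ Finset.range k, (1 - x ^ (i + 1))

section EulerAux

variable {x : ℂ}

lemma eulerD_zero : eulerD x 0 = 1 := by simp [eulerD]

lemma eulerD_succ (k : ℕ) : eulerD x (k + 1) = eulerD x k * (1 - x ^ (k + 1)) :=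
  Finset.prod_range_succ _ _

lemma euler_pow_lt (hx : ‖x‖ < 1) (i : ℕ) : ‖x ^ (i + 1)‖ < 1 := by
  rw [norm_pow]; exact pow_lt_one₀ (norm_nonneg x) hx (by omega)

lemma euler_one_sub_ne (hx : ‖x‖ < 1) (i : ℕ) : (1 : ℂ) - x ^ (i + 1) ≠ 0 := by
  apply sub_ne_zero_of_ne
  intro h
  have := euler_pow_lt hx i
  rw [← h, norm_one] at this
  exact lt_irrefl _ this

lemma eulerD_ne (hx : ‖x‖ < 1) (k : ℕ) : eulerD x k ≠ 0 :=
  Finset.prod_ne_zero_iff.mpr fun i _ => euler_one_sub_ne hx i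

lemma euler_D_lower (hx : ‖x‖ < 1) :
    ∃ c > 0, ∀ k : ℕ, c ≤ ‖eulerD x k‖ := by
  set t : ℝ := ‖x‖ with htdef
  have hx' : t < 1 := hx
  have ht0 : 0 ≤ t := norm_nonneg x
  obtain ⟨N, hN⟩ : ∃ N : ℕ, t ^ (N + 1) ≤ (1 - t) / 2 := by
    obtain ⟨n, hn⟩ := exists_pow_lt_of_lt_one (by linarith : (0:ℝ) < (1 - t)/2) hx'
    exact ⟨n, by
      calc t ^ (n + 1) ≤ t ^ n := pow_le_pow_of_le_one ht0 hx'.le (by omega)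
      _ ≤ (1 - t)/2 := hn.le⟩
  have hfac : ∀ i : ℕ, 0 < 1 - t ^ (i + 1) := by
    intro i
    have : t ^ (i + 1) ≤ t := by
      calc t ^ (i + 1) ≤ t ^ 1 := pow_le_pow_of_le_one ht0 hx'.le (by omega)
      _ = t := pow_one t
    linarith
  set p : ℕ → ℝ := fun k => ∏ i ∈ Finset.range k, (1 - t ^ (i + 1)) with hp
  have hppos : ∀ k, 0 < p k := fun k => Finset.prod_pos (fun i _ => hfac i)
  refine ⟨p N / 2, by have := hppos N; positivity, fun k => ?_⟩
  have key : p N / 2 ≤ p k := by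
    rcases le_total k N with hkN | hNk
    · have : p N ≤ p k := by
        have hsplit : p k * ∏ i ∈ Finset.Ico k N, (1 - t ^ (i + 1)) = p N := by
          rw [hp]
          simp only [Finset.range_eq_Ico]
          exact Finset.prod_Ico_consecutive _ (Nat.zero_le k) hkN
        have hle1 : ∏ i ∈ Finset.Ico k N, (1 - t ^ (i + 1)) ≤ 1 :=
          Finset.prod_le_one (fun i _ => (hfac i).le) (fun i _ => by
            have : 0 ≤ t ^ (i+1) := by positivity
            linarith)
        nlinarith [hppos k]
      linarith [hppos N]
    · have hsplit : p N * ∏ i ∈ Finset.Ico N k, (1 - t ^ (i + 1)) = p k := by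
        rw [hp]
        simp only [Finset.range_eq_Ico]
        exact Finset.prod_Ico_consecutive _ (Nat.zero_le N) hNk
      have hsum : ∑ i ∈ Finset.Ico N k, t ^ (i + 1) ≤ 1 / 2 := by
        have h1 : ∑ i ∈ Finset.Ico N k, t ^ (i + 1)
            = t ^ (N + 1) * ∑ j ∈ Finset.range (k - N), t ^ j := by
          rw [Finset.sum_Ico_eq_sum_range, Finset.mul_sum]
          apply Finset.sum_congr rfl
          intro j _
          rw [← pow_add]
          ring_nf
        have h2 : ∑ j ∈ Finset.range (k - N), t ^ j ≤ (1 - t)⁻¹ := by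
          have := Summable.sum_le_tsum (Finset.range (k - N)) (fun i _ => by positivity)
            (summable_geometric_of_lt_one ht0 hx')
          rwa [tsum_geometric_of_lt_one ht0 hx'] at this
        calc ∑ i ∈ Finset.Ico N k, t ^ (i + 1)
            = t ^ (N + 1) * ∑ j ∈ Finset.range (k - N), t ^ j := h1
          _ ≤ ((1 - t)/2) * (1 - t)⁻¹ := by
              apply mul_le_mul hN h2 (Finset.sum_nonneg fun i _ => by positivity)
                (by linarith)
          _ ≤ 1 / 2 := by
              rw [div_mul_eq_mul_div, mul_inv_cancel₀ (by linarith : (1:ℝ) - t ≠ 0)]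
      have hge : 1 - ∑ i ∈ Finset.Ico N k, t ^ (i + 1)
          ≤ ∏ i ∈ Finset.Ico N k, (1 - t ^ (i + 1)) :=
        euler_aux_prod_one_sub_ge _ _ (fun i _ => by positivity)
          (fun i _ => by have := hfac i; linarith)
      nlinarith [hppos N]
  refine key.trans ?_
  rw [eulerD, norm_prod]
  apply Finset.prod_le_prod (fun i _ => (hfac i).le)
  intro i _
  have h1 : ‖(1:ℂ)‖ - ‖x ^ (i+1)‖ ≤ ‖(1:ℂ) - x ^ (i+1)‖ := norm_sub_norm_le _ _
  rw [norm_one, norm_pow] at h1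
  exact h1

end EulerAux

noncomputable def eulerS (x w : ℂ) : ℂ := ∑' k : ℕ, x ^ k * w ^ k / eulerD x k

section EulerMain

variable {x : ℂ}

lemma euler_summable (hx : ‖x‖ < 1) (w : ℂ) (hw : ‖w‖ < 1) :
    Summable (fun k : ℕ => x ^ k * w ^ k / eulerD x k) := by
  obtain ⟨c, hc0, hc⟩ := euler_D_lower hx
  apply Summable.of_norm
  have hgeo : Summable (fun k : ℕ => (‖x‖ * ‖w‖) ^ k * c⁻¹) := by
    apply Summable.mul_right
    apply summable_geometric_of_lt_one (by positivity)
    nlinarith [norm_nonneg x, norm_nonneg w]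
  apply Summable.of_nonneg_of_le (fun k => norm_nonneg _) (fun k => ?_) hgeo
  calc ‖x ^ k * w ^ k / eulerD x k‖ = ‖x‖ ^ k * ‖w‖ ^ k / ‖eulerD x k‖ := by
        rw [norm_div, norm_mul, norm_pow, norm_pow]
    _ ≤ ‖x‖ ^ k * ‖w‖ ^ k / c := by gcongr; exact hc k
    _ = (‖x‖ * ‖w‖) ^ k * c⁻¹ := by rw [mul_pow, div_eq_mul_inv]

lemma euler_key (hx : ‖x‖ < 1) (w : ℂ) (k : ℕ) :
    x ^ (k + 1) * w ^ (k + 1) / eulerD x (k + 1) * (1 - x ^ (k + 1))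
      = x * w * (x ^ k * w ^ k / eulerD x k) := by
  rw [eulerD_succ k, euler_aux_cancel _ _ _ (euler_one_sub_ne hx k) (eulerD_ne hx k)]
  ring

lemma euler_feq (hx : ‖x‖ < 1) (w : ℂ) (hw : ‖w‖ < 1) :
    eulerS x (x * w) = (1 - x * w) * eulerS x w := by
  have hw' : ‖x * w‖ < 1 := by
    rw [norm_mul]; nlinarith [norm_nonneg x, norm_nonneg w]
  have h1 := euler_summable hx w hw
  have h2 : Summable (fun k : ℕ => x ^ (k + 1) * w ^ (k + 1) / eulerD x (k + 1)) :=
    (summable_nat_add_iff (f := fun k : ℕ => x ^ k * w ^ k / eulerD x k) 1).mpr h1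
  have h3 : Summable (fun k : ℕ => x * w * (x ^ k * w ^ k / eulerD x k)) := h1.mul_left _
  have hterm : ∀ k : ℕ, x ^ (k + 1) * (x * w) ^ (k + 1) / eulerD x (k + 1)
      = x ^ (k + 1) * w ^ (k + 1) / eulerD x (k + 1)
        - x * w * (x ^ k * w ^ k / eulerD x k) := by
    intro k
    rw [← euler_key hx w k]
    ring
  have hSx : eulerS x (x * w)
      = 1 + ∑' k : ℕ, x ^ (k + 1) * (x * w) ^ (k + 1) / eulerD x (k + 1) := by
    rw [eulerS, Summable.tsum_eq_zero_add (euler_summable hx _ hw')]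
    simp [eulerD_zero]
  have hSw : (∑' k : ℕ, x ^ (k + 1) * w ^ (k + 1) / eulerD x (k + 1))
      = eulerS x w - 1 := by
    have h := Summable.tsum_eq_zero_add h1
    simp only [pow_zero, eulerD_zero, one_mul, mul_one, div_one] at h
    rw [eulerS, h]
    ring
  rw [hSx, tsum_congr hterm, Summable.tsum_sub h2 h3, hSw, tsum_mul_left, ← eulerS]
  ring

end EulerMain

section EulerMain2

variable {x z : ℂ}

lemma euler_iter (hx : ‖x‖ < 1) (hz : ‖z‖ < 1) (n : ℕ) :
    eulerS x (x ^ n * z) = (∏ m ∈ Finset.range n, (1 - x ^ (m + 1) * z)) * eulerS x z := by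
  induction n with
  | zero => simp
  | succ n ih =>
    have hzn' : ‖x ^ n * z‖ < 1 := by
      rw [norm_mul, norm_pow]
      have h1 : ‖x‖ ^ n ≤ 1 := pow_le_one₀ (norm_nonneg x) hx.le
      nlinarith [norm_nonneg z, pow_nonneg (norm_nonneg x) n]
    have h := euler_feq hx (x ^ n * z) hzn'
    have hx1 : x * (x ^ n * z) = x ^ (n + 1) * z := by ring
    rw [hx1] at h
    rw [h, ih, Finset.prod_range_succ]
    ring

lemma euler_tendsto_one (hx : ‖x‖ < 1) (hz : ‖z‖ < 1) :
    Tendsto (fun n : ℕ => eulerS x (x ^ n * z)) atTop (𝓝 1) := by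
  obtain ⟨c, hc0, hc⟩ := euler_D_lower hx
  have hbound : ∀ w : ℂ, ‖w‖ ≤ ‖z‖ → ‖eulerS x w - 1‖ ≤ ‖w‖ * ((1 - ‖z‖)⁻¹ * c⁻¹) := by
    intro w hwz
    have hw : ‖w‖ < 1 := lt_of_le_of_lt hwz hz
    have h1 := euler_summable hx w hw
    have h2 : Summable (fun k : ℕ => x ^ (k + 1) * w ^ (k + 1) / eulerD x (k + 1)) :=
      (summable_nat_add_iff (f := fun k : ℕ => x ^ k * w ^ k / eulerD x k) 1).mpr h1
    have hSm : eulerS x w - 1 = ∑' k : ℕ, x ^ (k + 1) * w ^ (k + 1) / eulerD x (k + 1) := by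
      rw [eulerS, Summable.tsum_eq_zero_add h1]
      simp [eulerD_zero]
    rw [hSm]
    have hgs : HasSum (fun k : ℕ => ‖w‖ * (‖z‖ ^ k * c⁻¹))
        (‖w‖ * ((1 - ‖z‖)⁻¹ * c⁻¹)) := by
      exact (((hasSum_geometric_of_lt_one (norm_nonneg z) hz).mul_right c⁻¹).mul_left ‖w‖)
    apply tsum_of_norm_bounded hgs
    intro k
    rw [norm_div, norm_mul, norm_pow, norm_pow]
    have e1 : ‖w‖ ^ (k + 1) ≤ ‖w‖ * ‖z‖ ^ k := by
      rw [pow_succ']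
      gcongr
    calc ‖x‖ ^ (k + 1) * ‖w‖ ^ (k + 1) / ‖eulerD x (k + 1)‖
        ≤ ‖x‖ ^ (k + 1) * (‖w‖ * ‖z‖ ^ k) / c := by
          gcongr
          exact hc (k + 1)
      _ ≤ 1 * (‖w‖ * ‖z‖ ^ k) / c := by
          gcongr
          all_goals exact pow_le_one₀ (norm_nonneg x) hx.le
      _ = ‖w‖ * (‖z‖ ^ k * c⁻¹) := by rw [one_mul, div_eq_mul_inv]; ring
  rw [tendsto_iff_norm_sub_tendsto_zero]
  apply squeeze_zero (fun n => norm_nonneg _)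
    (g := fun n : ℕ => ‖x‖ ^ n * (‖z‖ * ((1 - ‖z‖)⁻¹ * c⁻¹)))
  · intro n
    have hle : ‖x ^ n * z‖ ≤ ‖z‖ := by
      rw [norm_mul, norm_pow]
      have h1 : ‖x‖ ^ n ≤ 1 := pow_le_one₀ (norm_nonneg x) hx.le
      nlinarith [norm_nonneg z, pow_nonneg (norm_nonneg x) n]
    calc ‖eulerS x (x ^ n * z) - 1‖ ≤ ‖x ^ n * z‖ * ((1 - ‖z‖)⁻¹ * c⁻¹) := hbound _ hle
      _ = ‖x‖ ^ n * (‖z‖ * ((1 - ‖z‖)⁻¹ * c⁻¹)) := by rw [norm_mul, norm_pow]; ring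
  · have := (tendsto_pow_atTop_nhds_zero_of_lt_one (norm_nonneg x) hx).mul_const
      (‖z‖ * ((1 - ‖z‖)⁻¹ * c⁻¹))
    simpa using this

lemma euler_multipliable (hx : ‖x‖ < 1) (hz : ‖z‖ < 1) :
    Multipliable (fun m : ℕ => 1 - x ^ (m + 1) * z) := by
  have hvnorm : ∀ m : ℕ, ‖x ^ (m + 1) * z‖ = ‖x‖ ^ (m + 1) * ‖z‖ := fun m => by
    rw [norm_mul, norm_pow]
  have hvr : ∀ m : ℕ, ‖x‖ ^ (m + 1) * ‖z‖ ≤ ‖x‖ * ‖z‖ := by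
    intro m
    apply mul_le_mul_of_nonneg_right ?_ (norm_nonneg z)
    calc ‖x‖ ^ (m + 1) ≤ ‖x‖ ^ 1 := pow_le_pow_of_le_one (norm_nonneg x) hx.le (by omega)
      _ = ‖x‖ := pow_one _
  have hr : ‖x‖ * ‖z‖ < 1 := by nlinarith [norm_nonneg x, norm_nonneg z]
  have hr0 : 0 ≤ ‖x‖ * ‖z‖ := by positivity
  have hv1 : ∀ m : ℕ, ‖-(x ^ (m + 1) * z)‖ < 1 := by
    intro m
    rw [norm_neg, hvnorm m]
    exact lt_of_le_of_lt (hvr m) hr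
  have hfn : ∀ (_ : Unit) (m : ℕ), (1 : ℂ) - x ^ (m + 1) * z ≠ 0 := by
    intro _ m
    apply sub_ne_zero_of_ne
    intro h
    have := hv1 m
    rw [norm_neg, ← h, norm_one] at this
    exact lt_irrefl _ this
  have hf : Summable (fun m : ℕ => Complex.log (1 - x ^ (m + 1) * z)) := by
    set K : ℝ := (‖x‖ * ‖z‖) * (1 - ‖x‖ * ‖z‖)⁻¹ / 2 + 1 with hK
    have h1r : (0:ℝ) < 1 - ‖x‖ * ‖z‖ := by linarith
    apply Summable.of_norm_bounded (g := fun m : ℕ => ‖x‖ ^ (m + 1) * ‖z‖ * K)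
    · have hgeo : Summable (fun m : ℕ => ‖x‖ ^ m * (‖x‖ * (‖z‖ * K))) :=
        (summable_geometric_of_lt_one (norm_nonneg x) hx).mul_right _
      apply hgeo.congr
      intro m
      rw [pow_succ']
      ring
    · intro m
      have hlog := Complex.norm_log_one_add_le (hv1 m)
      rw [show (1 : ℂ) + -(x ^ (m + 1) * z) = 1 - x ^ (m + 1) * z by ring] at hlog
      refine hlog.trans ?_
      rw [norm_neg, hvnorm m]
      set v : ℝ := ‖x‖ ^ (m + 1) * ‖z‖ with hv
      have hv0 : 0 ≤ v := by positivity
      have hvle : v ≤ ‖x‖ * ‖z‖ := hvr m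
      have hinv : (1 - v)⁻¹ ≤ (1 - ‖x‖ * ‖z‖)⁻¹ := by
        apply inv_anti₀ (by linarith) (by linarith)
      have hsq : v ^ 2 ≤ v * (‖x‖ * ‖z‖) := by nlinarith
      have h1v : 0 ≤ (1 - v)⁻¹ := by
        apply inv_nonneg.mpr; linarith [lt_of_le_of_lt hvle hr]
      calc v ^ 2 * (1 - v)⁻¹ / 2 + v
          ≤ v * (‖x‖ * ‖z‖) * (1 - ‖x‖ * ‖z‖)⁻¹ / 2 + v := by
            have hmul : v ^ 2 * (1 - v)⁻¹ ≤ v * (‖x‖ * ‖z‖) * (1 - ‖x‖ * ‖z‖)⁻¹ :=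
              mul_le_mul hsq hinv h1v (by positivity)
            linarith
        _ = v * K := by rw [hK]; ring
  exact Complex.multipliable_of_summable_log hf

end EulerMain2


/-- For all complex `x`, `z` with `|x| < 1` and `|z| < 1`:
`∏_{m=1}^∞ (1 - x^m z) = (Σ_{k=0}^∞ x^k z^k / ∏_{i=1}^k (1 - x^i))⁻¹`; both the product and
the series converge, the sum of the series is nonzero, and equivalently
`∏_{m=1}^∞ (1 - x^m z) · Σ_{k=0}^∞ (xz)^k / ∏_{i=1}^k (1 - x^i) = 1`. -/
theorem euler_product_inverse_identity (x z : ℂ) (hx : ‖x‖ < 1)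
    (hz : ‖z‖ < 1) :
    Multipliable (fun m : ℕ => 1 - x ^ (m + 1) * z) ∧
    Summable (fun k : ℕ => x ^ k * z ^ k / ∏ i ∈ Finset.range k, (1 - x ^ (i + 1))) ∧
    (∑' k : ℕ, x ^ k * z ^ k / ∏ i ∈ Finset.range k, (1 - x ^ (i + 1))) ≠ 0 ∧
    (∏' m : ℕ, (1 - x ^ (m + 1) * z)) =
      (∑' k : ℕ, x ^ k * z ^ k / ∏ i ∈ Finset.range k, (1 - x ^ (i + 1)))⁻¹ ∧
    (∏' m : ℕ, (1 - x ^ (m + 1) * z)) *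
      (∑' k : ℕ, x ^ k * z ^ k / ∏ i ∈ Finset.range k, (1 - x ^ (i + 1))) = 1 := by
  have hxn : ‖x‖ < 1 := hx
  have hzn : ‖z‖ < 1 := hz
  have hm := euler_multipliable hxn hzn
  have hsum : Summable (fun k : ℕ => x ^ k * z ^ k / ∏ i ∈ Finset.range k, (1 - x ^ (i + 1))) :=
    euler_summable hxn z hzn
  have hprod := hm.hasProd.tendsto_prod_nat
  have h5 := hprod.mul_const (eulerS x z)
  have h6 : (fun n : ℕ => (∏ m ∈ Finset.range n, (1 - x ^ (m + 1) * z)) * eulerS x z)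
      = fun n : ℕ => eulerS x (x ^ n * z) := funext fun n => (euler_iter hxn hzn n).symm
  rw [h6] at h5
  have hmain : (∏' m : ℕ, (1 - x ^ (m + 1) * z)) * eulerS x z = 1 :=
    tendsto_nhds_unique h5 (euler_tendsto_one hxn hzn)
  have hSz : eulerS x z
      = ∑' k : ℕ, x ^ k * z ^ k / ∏ i ∈ Finset.range k, (1 - x ^ (i + 1)) := rfl
  rw [hSz] at hmain
  exact ⟨hm, hsum, right_ne_zero_of_mul_eq_one hmain,
    eq_inv_of_mul_eq_one_left hmain, hmain⟩
end

section
/- For all 0<q<1 and all integers n≥1, the offset b_n(q) satisfies b_n(q) > 2q·κ(q)²·(1−q^n)/(1−q)². In particular b_n(q) > 0. -/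
section Aux

variable {q : ℝ}

private lemma pow_lt_one'' (hq0 : 0 < q) (hq1 : q < 1) {m : ℕ} (hm : 1 ≤ m) : q ^ m < 1 := by
  calc q ^ m ≤ q ^ 1 := pow_le_pow_of_le_one hq0.le hq1.le hm
  _ = q := pow_one q
  _ < 1 := hq1

private lemma neg_log_le (hq0 : 0 < q) (hq1 : q < 1) {x : ℝ} (hx0 : 0 < x) (hxq : x ≤ q) :
    -Real.log (1 - x) ≤ (1 - q)⁻¹ * x := by
  have h1 : 0 < 1 - x := by linarith
  have h2 : -Real.log (1 - x) = Real.log (1 - x)⁻¹ := (Real.log_inv _).symm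
  have h3 : Real.log (1 - x)⁻¹ ≤ (1 - x)⁻¹ - 1 :=
    Real.log_le_sub_one_of_pos (by positivity)
  have h4 : (1 - x)⁻¹ - 1 = x / (1 - x) := by field_simp; ring
  have h5 : x / (1 - x) ≤ x / (1 - q) := by
    apply div_le_div_of_nonneg_left hx0.le (by linarith) (by linarith)
  have h6 : x / (1 - q) = (1 - q)⁻¹ * x := by ring
  linarith

private lemma summable_geom_tail (hq0 : 0 < q) (hq1 : q < 1) (n : ℕ) :
    Summable fun i : ℕ => q ^ (n + i) := by
  have h : Summable fun i : ℕ => q ^ n * q ^ i :=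
    (summable_geometric_of_lt_one hq0.le hq1).mul_left _
  simpa [pow_add] using h

private lemma tsum_geom_tail (hq0 : 0 < q) (hq1 : q < 1) (n : ℕ) :
    ∑' i : ℕ, q ^ (n + i) = q ^ n / (1 - q) := by
  have h : ∑' i : ℕ, q ^ n * q ^ i = q ^ n * (1 - q)⁻¹ := by
    rw [tsum_mul_left, tsum_geometric_of_lt_one hq0.le hq1]
  rw [show (fun i : ℕ => q ^ (n + i)) = fun i : ℕ => q ^ n * q ^ i from
    funext fun i => by rw [pow_add]]
  rw [h]; ring

private lemma summable_log (hq0 : 0 < q) (hq1 : q < 1) (n : ℕ) (hn : 1 ≤ n) :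
    Summable fun i : ℕ => Real.log (1 - q ^ (n + i)) := by
  have hs : Summable fun i : ℕ => (1 - q)⁻¹ * q ^ (n + i) :=
    (summable_geom_tail hq0 hq1 n).mul_left _
  have hneg : Summable fun i : ℕ => -Real.log (1 - q ^ (n + i)) := by
    apply hs.of_nonneg_of_le
    · intro i
      have h1 : q ^ (n + i) < 1 := pow_lt_one'' hq0 hq1 (by omega)
      have h2 : (0:ℝ) < q ^ (n + i) := pow_pos hq0 _
      have := Real.log_nonpos (by linarith) (by linarith : 1 - q ^ (n + i) ≤ 1)
      linarith
    · intro i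
      apply neg_log_le hq0 hq1 (pow_pos hq0 _)
      calc q ^ (n + i) ≤ q ^ 1 := pow_le_pow_of_le_one hq0.le hq1.le (by omega)
      _ = q := pow_one q
  simpa using hneg.neg

private lemma mu_hasProd (hq0 : 0 < q) (hq1 : q < 1) (n : ℕ) (hn : 1 ≤ n) :
    HasProd (fun i : ℕ => 1 - q ^ (n + i))
      (Real.exp (∑' i : ℕ, Real.log (1 - q ^ (n + i)))) := by
  have h := (summable_log hq0 hq1 n hn).hasSum.rexp
  have hfun : (Real.exp ∘ fun i : ℕ => Real.log (1 - q ^ (n + i))) =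
      fun i : ℕ => 1 - q ^ (n + i) := by
    funext i
    simp only [Function.comp]
    exact Real.exp_log (by
      have : q ^ (n + i) < 1 := pow_lt_one'' hq0 hq1 (by omega)
      linarith)
  rwa [hfun] at h

private lemma mu_eq_exp (hq0 : 0 < q) (hq1 : q < 1) (n : ℕ) (hn : 1 ≤ n) :
    eulerMu q n = Real.exp (∑' i : ℕ, Real.log (1 - q ^ (n + i))) :=
  (mu_hasProd hq0 hq1 n hn).tprod_eq

private lemma mu_pos (hq0 : 0 < q) (hq1 : q < 1) (n : ℕ) (hn : 1 ≤ n) :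
    0 < eulerMu q n := by
  rw [mu_eq_exp hq0 hq1 n hn]; exact Real.exp_pos _

private lemma mu_le (hq0 : 0 < q) (hq1 : q < 1) (n : ℕ) (hn : 1 ≤ n) :
    eulerMu q n ≤ Real.exp (-(q ^ n / (1 - q))) := by
  rw [mu_eq_exp hq0 hq1 n hn]
  apply Real.exp_le_exp.mpr
  have h1 : ∑' i : ℕ, Real.log (1 - q ^ (n + i)) ≤ ∑' i : ℕ, -(q ^ (n + i)) := by
    apply Summable.tsum_le_tsum _ (summable_log hq0 hq1 n hn) (summable_geom_tail hq0 hq1 n).neg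
    intro i
    have h2 : 0 < 1 - q ^ (n + i) := by
      have : q ^ (n + i) < 1 := pow_lt_one'' hq0 hq1 (by omega)
      linarith
    have := Real.log_le_sub_one_of_pos h2
    linarith
  have h2 : ∑' i : ℕ, -(q ^ (n + i)) = -(q ^ n / (1 - q)) := by
    rw [tsum_neg, tsum_geom_tail hq0 hq1 n]
  linarith

private lemma kappa_split (hq0 : 0 < q) (hq1 : q < 1) (k : ℕ) :
    eulerKappa q = eulerLam q k * eulerMu q (k + 1) := by
  have hm : Multipliable fun i : ℕ => (fun n : ℕ => 1 - q ^ (n + 1)) (i + k) := by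
    refine ((mu_hasProd hq0 hq1 (k + 1) (by omega)).multipliable).congr fun i => ?_
    simp only
    rw [show k + 1 + i = i + k + 1 from by omega]
  have h := Multipliable.prod_mul_tprod_nat_mul' (f := fun i : ℕ => 1 - q ^ (i + 1)) (k := k) hm
  rw [eulerKappa, ← h, eulerLam, eulerMu]
  congr 1
  exact tprod_congr fun i => by rw [show i + k + 1 = k + 1 + i from by omega]

private lemma kappa_pos (hq0 : 0 < q) (hq1 : q < 1) : 0 < eulerKappa q := by
  have h := kappa_split hq0 hq1 0
  rw [eulerLam, Finset.range_zero, Finset.prod_empty, one_mul] at h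
  rw [h]
  exact mu_pos hq0 hq1 1 le_rfl

private lemma lam_pos (hq0 : 0 < q) (hq1 : q < 1) (k : ℕ) : 0 < eulerLam q k := by
  unfold eulerLam
  apply Finset.prod_pos
  intro i _
  have : q ^ (i + 1) < 1 := pow_lt_one'' hq0 hq1 (by omega)
  linarith

private lemma term_gt (hq0 : 0 < q) (hq1 : q < 1) (a b : ℕ) :
    eulerKappa q ^ 2 * (1 + (q ^ (a + 1) + q ^ (b + 1)) / (1 - q)) <
      eulerLam q a * eulerLam q b := by
  set κ := eulerKappa q with hκ
  have hκpos : 0 < κ := kappa_pos hq0 hq1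
  have hμa : 0 < eulerMu q (a + 1) := mu_pos hq0 hq1 _ (by omega)
  have hμb : 0 < eulerMu q (b + 1) := mu_pos hq0 hq1 _ (by omega)
  have hsplit : κ ^ 2 = (eulerLam q a * eulerLam q b) * (eulerMu q (a + 1) * eulerMu q (b + 1)) := by
    rw [hκ, sq, show eulerKappa q * eulerKappa q =
      (eulerLam q a * eulerMu q (a + 1)) * (eulerLam q b * eulerMu q (b + 1)) from by
        rw [← kappa_split hq0 hq1 a, ← kappa_split hq0 hq1 b]]
    ring
  set s : ℝ := q ^ (a + 1) / (1 - q) with hs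
  set t : ℝ := q ^ (b + 1) / (1 - q) with ht
  have hspos : 0 < s := by
    apply div_pos (pow_pos hq0 _) (by linarith)
  have htpos : 0 < t := by
    apply div_pos (pow_pos hq0 _) (by linarith)
  have hμab : eulerMu q (a + 1) * eulerMu q (b + 1) ≤ Real.exp (-(s + t)) := by
    have h1 := mu_le hq0 hq1 (a + 1) (by omega)
    have h2 := mu_le hq0 hq1 (b + 1) (by omega)
    calc eulerMu q (a + 1) * eulerMu q (b + 1)
        ≤ Real.exp (-s) * Real.exp (-t) :=
          mul_le_mul h1 h2 hμb.le (Real.exp_pos _).le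
      _ = Real.exp (-(s + t)) := by rw [← Real.exp_add, ← neg_add]
  have hlam : 0 < eulerLam q a * eulerLam q b :=
    mul_pos (lam_pos hq0 hq1 a) (lam_pos hq0 hq1 b)
  have hexp : 1 + s + t < Real.exp (s + t) := by
    have := Real.add_one_lt_exp (x := s + t) (by positivity)
    linarith
  have key : κ ^ 2 * Real.exp (s + t) ≤ eulerLam q a * eulerLam q b := by
    have h3 : κ ^ 2 ≤ (eulerLam q a * eulerLam q b) * Real.exp (-(s + t)) := by
      rw [hsplit]
      exact mul_le_mul_of_nonneg_left hμab hlam.le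
    have h4 : Real.exp (-(s + t)) * Real.exp (s + t) = 1 := by
      rw [Real.exp_neg, inv_mul_cancel₀ (Real.exp_ne_zero _)]
    calc κ ^ 2 * Real.exp (s + t)
        ≤ ((eulerLam q a * eulerLam q b) * Real.exp (-(s + t))) * Real.exp (s + t) :=
          mul_le_mul_of_nonneg_right h3 (Real.exp_pos _).le
      _ = eulerLam q a * eulerLam q b := by rw [mul_assoc, h4, mul_one]
  have hlhs : κ ^ 2 * (1 + (q ^ (a + 1) + q ^ (b + 1)) / (1 - q)) = κ ^ 2 * (1 + s + t) := by
    rw [hs, ht]; ring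
  rw [hlhs]
  calc κ ^ 2 * (1 + s + t) < κ ^ 2 * Real.exp (s + t) := by
        apply mul_lt_mul_of_pos_left hexp (by positivity)
    _ ≤ eulerLam q a * eulerLam q b := key

end Aux

/-- For all `0 < q < 1` and all integers `n ≥ 1`,
`b_n(q) > 2q·κ(q)²·(1-q^n)/(1-q)²`; in particular `b_n(q) > 0`. -/
theorem postOffset_gt (q : ℝ) (hq0 : 0 < q) (hq1 : q < 1) (n : ℕ) (hn : 1 ≤ n) :
    2 * q * eulerKappa q ^ 2 * (1 - q ^ n) / (1 - q) ^ 2 < postOffset q n ∧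
    0 < postOffset q n := by
  have h1q : (0:ℝ) < 1 - q := by linarith
  set κ2 : ℝ := eulerKappa q ^ 2 with hκ2
  have hκ2pos : 0 < κ2 := by
    rw [hκ2]; exact pow_pos (kappa_pos hq0 hq1) 2
  -- geometric sum over Icc 1 n
  have h1qne : (1:ℝ) - q ≠ 0 := by linarith
  have hG : ∀ m : ℕ, ∑ k ∈ Finset.Icc 1 m, q ^ k = q * (1 - q ^ m) / (1 - q) := by
    intro m
    induction m with
    | zero => simp
    | succ m ih =>
      rw [Finset.sum_Icc_succ_top (by omega : 1 ≤ m + 1), ih]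
      field_simp
      ring
  have hG' : ∑ k ∈ Finset.Icc 1 n, q ^ (n - k + 1) = q * (1 - q ^ n) / (1 - q) := by
    rw [← hG n]
    apply Finset.sum_nbij' (fun k => n + 1 - k) (fun k => n + 1 - k)
    · intro a ha; simp only [Finset.mem_Icc] at ha ⊢; omega
    · intro a ha; simp only [Finset.mem_Icc] at ha ⊢; omega
    · intro a ha; simp only [Finset.mem_Icc] at ha; omega
    · intro a ha; simp only [Finset.mem_Icc] at ha; omega
    · intro a ha; simp only [Finset.mem_Icc] at ha
      congr 1
      omega
  -- key sum inequality
  have key : ∑ k ∈ Finset.Icc 1 n, κ2 * (1 + (q ^ k + q ^ (n - k + 1)) / (1 - q)) <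
      ∑ k ∈ Finset.Icc 1 n, eulerLam q (k - 1) * eulerLam q (n - k) := by
    apply Finset.sum_lt_sum_of_nonempty
    · exact ⟨1, by simp only [Finset.mem_Icc]; omega⟩
    · intro k hk
      simp only [Finset.mem_Icc] at hk
      have h := term_gt hq0 hq1 (k - 1) (n - k)
      rw [show k - 1 + 1 = k from by omega] at h
      exact h
  -- compute the lower sum
  have hsum : ∑ k ∈ Finset.Icc 1 n, κ2 * (1 + (q ^ k + q ^ (n - k + 1)) / (1 - q)) =
      n * κ2 + 2 * q * κ2 * (1 - q ^ n) / (1 - q) ^ 2 := by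
    have hre : ∀ k, κ2 * (1 + (q ^ k + q ^ (n - k + 1)) / (1 - q)) =
        κ2 + (κ2 / (1 - q)) * q ^ k + (κ2 / (1 - q)) * q ^ (n - k + 1) := by
      intro k; field_simp; ring
    rw [Finset.sum_congr rfl fun k _ => hre k]
    rw [Finset.sum_add_distrib, Finset.sum_add_distrib, ← Finset.mul_sum, ← Finset.mul_sum,
      hG', hG n, Finset.sum_const, Nat.card_Icc, nsmul_eq_mul]
    simp only [Nat.add_sub_cancel]
    field_simp
    ring
  have hmain : n * κ2 + 2 * q * κ2 * (1 - q ^ n) / (1 - q) ^ 2 <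
      ∑ k ∈ Finset.Icc 1 n, eulerLam q (k - 1) * eulerLam q (n - k) := by
    rw [← hsum]; exact key
  have hfirst : 2 * q * eulerKappa q ^ 2 * (1 - q ^ n) / (1 - q) ^ 2 < postOffset q n := by
    rw [postOffset, ← hκ2]
    linarith
  refine ⟨hfirst, ?_⟩
  have hqn : q ^ n < 1 := pow_lt_one'' hq0 hq1 hn
  have : 0 < 2 * q * eulerKappa q ^ 2 * (1 - q ^ n) / (1 - q) ^ 2 := by
    apply div_pos _ (by positivity)
    have := kappa_pos hq0 hq1
    have h1 : (0:ℝ) < 1 - q ^ n := by linarith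
    positivity
  linarith
end
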